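/- arXiv:2508.03150 — 2 statements merged into one kernel-verified Lean document; each statement's English description precedes it below -/
import Mathlib

section
/- General rectangle relation (Theorem 4.4): Let R be a commutative ring, N a positive integer, U an N×N upper unitriangular matrix over R, and r an integer. Let p, q ≥ 1 and a, b ≥ 0 satisfy a ≤ q and 2 ≤ a+b ≤ p+1, and assume p+1 ≤ r−1 and q+b ≤ N−r. Then (−1)^{a+b} S^{(r)}_{[p+1|q+b−1]}(U) · S^{(r−1)}_{[p−1|q−a]^{p−a−b+1}}(U) = S^{(r)}_{[p|q+b−1]}(U) · S^{(r−1)}_{[p|q−a+1]}(U) − S^{(r)}_{[p|q−a]}(U) · S^{(r−1)}_{[p|q+b]}(U) + Σ_{t=0}^{a+b−3} (−1)^{t−1} S^{(r)}_{[p|q+b−1]_{q−a+t+1}}(U) · S^{(r−1)}_{[p−1|q−a]^{p−t−1}}(U), where [m|n] := (n^m), [m|n]^l := ((n+1)^l, n^{m−l}), and [m|n]_k := (n^m, k). -/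
open Matrix BigOperators Finset Filter

/-- Extend a `Fin N`-indexed matrix to `ℕ` indices by zero. -/
def matExt {R : Type*} [Zero R] {N : ℕ} (U : Matrix (Fin N) (Fin N) R) : ℕ → ℕ → R :=
  fun i j => if hi : i < N then (if hj : j < N then U ⟨i, hi⟩ ⟨j, hj⟩ else 0) else 0

/-- `U` is upper unitriangular. -/
def UpperUni {R : Type*} [Zero R] [One R] {N : ℕ} (U : Matrix (Fin N) (Fin N) R) : Prop :=
  (∀ i, U i i = 1) ∧ ∀ i j : Fin N, (j : ℕ) < (i : ℕ) → U i j = 0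

/-- `L` is lower unitriangular. -/
def LowerUni {R : Type*} [Zero R] [One R] {N : ℕ} (L : Matrix (Fin N) (Fin N) R) : Prop :=
  (∀ i, L i i = 1) ∧ ∀ i j : Fin N, (i : ℕ) < (j : ℕ) → L i j = 0

/-- 0-based entries of the Maya diagram `J(λ;r)` (the `a`-th smallest element, minus 1):
for `a = 0,…,r-1` this is `λ_{r-a} + a` (with `λ` 0-based). -/
def maya (lam : ℕ → ℕ) (r : ℕ) (a : Fin r) : ℕ := lam (r - 1 - (a : ℕ)) + (a : ℕ)

/-- The ninth variation of the skew Schur function `S^{(r)}_{λ/μ}(U)`: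
the minor of `U` on rows `J(μ;r)` and columns `J(λ;r)`. -/
def SchurV {R : Type*} [CommRing R] {N : ℕ} (U : Matrix (Fin N) (Fin N) R)
    (r : ℕ) (lam mu : ℕ → ℕ) : R :=
  Matrix.det (Matrix.of fun i j : Fin r => matExt U (maya mu r i) (maya lam r j))

/-- Conjugate partition (0-based), counting parts among indices `< B`. -/
def conjF (f : ℕ → ℕ) (B : ℕ) : ℕ → ℕ :=
  fun i => ((Finset.range B).filter fun j => i + 1 ≤ f j).card

/-- The hook partition `(a+1, 1^b)` (0-based function). -/
def hookP (a b : ℕ) : ℕ → ℕ := fun k => if k = 0 then a + 1 else if k ≤ b then 1 else 0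

/-- `h^{(r)}_d(U) = S^{(r)}_{(d)}(U)`, zero for `d < 0`. -/
def hSV {R : Type*} [CommRing R] {N : ℕ} (U : Matrix (Fin N) (Fin N) R) (r : ℕ) (d : ℤ) : R :=
  if 0 ≤ d then SchurV U r (fun k => if k = 0 then d.toNat else 0) (fun _ => 0) else 0

/-- `e^{(r)}_d(U) = S^{(r)}_{(1^d)}(U)`, zero for `d < 0`. -/
def eSV {R : Type*} [CommRing R] {N : ℕ} (U : Matrix (Fin N) (Fin N) R) (r : ℕ) (d : ℤ) : R :=
  if 0 ≤ d then SchurV U r (fun k => if k < d.toNat then 1 else 0) (fun _ => 0) else 0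

/-- The partition with Frobenius coordinates `(a|b)` (all 0-based as functions). -/
def frobP (p : ℕ) (a b : Fin p → ℕ) : ℕ → ℕ :=
  fun i => if h : i < p then a ⟨i, h⟩ + i + 1
    else (Finset.univ.filter fun j : Fin p => i < b j + (j : ℕ) + 1).card

/-- `f : ℕ → ℤ` is a partition of length `≤ B`. -/
def IsPartZ (B : ℕ) (f : ℕ → ℤ) : Prop :=
  (∀ i, f (i + 1) ≤ f i) ∧ (∀ i, 0 ≤ f i) ∧ (∀ i, B ≤ i → f i = 0)

/-- `lam/mu` is a skew partition (of length `≤ B`). -/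
def IsSkewZ (B : ℕ) (lam mu : ℕ → ℤ) : Prop :=
  IsPartZ B lam ∧ IsPartZ B mu ∧ ∀ i, mu i ≤ lam i

open Classical in
/-- `S^{(r)}_{λ/μ}(U)` with the convention that it is `0` if `λ/μ` is not a skew partition. -/
noncomputable def SchurVz {R : Type*} [CommRing R] {N : ℕ} (U : Matrix (Fin N) (Fin N) R)
    (r B : ℕ) (lam mu : ℕ → ℤ) : R :=
  if IsSkewZ B lam mu then SchurV U r (fun i => (lam i).toNat) (fun i => (mu i).toNat) else 0

open Classical in
/-- `S^{(r)}_{λ'/μ'}(U)` applied to the conjugates, with the zero convention. -/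
noncomputable def SchurVzConj {R : Type*} [CommRing R] {N : ℕ} (U : Matrix (Fin N) (Fin N) R)
    (r B : ℕ) (lam mu : ℕ → ℤ) : R :=
  if IsSkewZ B lam mu then
    SchurV U r (conjF (fun i => (lam i).toNat) B) (conjF (fun i => (mu i).toNat) B) else 0

/-- `lam/mu` is a skew partition (ℕ-valued version). -/
def IsSkewN (B : ℕ) (lam mu : ℕ → ℕ) : Prop :=
  (∀ i, lam (i + 1) ≤ lam i) ∧ (∀ i, mu (i + 1) ≤ mu i) ∧ (∀ i, mu i ≤ lam i) ∧
    (∀ i, B ≤ i → lam i = 0)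

open Classical in
noncomputable def SchurVn {R : Type*} [CommRing R] {N : ℕ} (U : Matrix (Fin N) (Fin N) R)
    (r B : ℕ) (lam mu : ℕ → ℕ) : R :=
  if IsSkewN B lam mu then SchurV U r lam mu else 0

/-- The rectangular partition `[m|n] = (n^m)`. -/
def rectP (m n : ℕ) : ℕ → ℕ := fun i => if i < m then n else 0

/-- `[m|n]^l = ((n+1)^l, n^{m-l})`. -/
def rectUpP (m n l : ℕ) : ℕ → ℕ := fun i => if i < l then n + 1 else if i < m then n else 0

/-- `[m|n]_k = (n^m, k)`. -/
def rectLowP (m n k : ℕ) : ℕ → ℕ := fun i => if i < m then n else if i = m then k else 0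

/-- `E + c·E_{t,t+1}` (indices 0-based). -/
def elemMat {R : Type*} [CommRing R] (N t : ℕ) (c : R) : Matrix (Fin N) (Fin N) R :=
  1 + Matrix.of (fun i j : Fin N => if (i : ℕ) = t ∧ (j : ℕ) = t + 1 then c else 0)

/-- `U = U_1 ⋯ U_M` with `U_k = (E + w_{k,1-r}E_{1,2}) ⋯ (E + w_{k,N-1-r}E_{N-1,N})`. -/
def UmatW {R : Type*} [CommRing R] (N M : ℕ) (r : ℤ) (w : ℕ → ℤ → R) :
    Matrix (Fin N) (Fin N) R :=
  ((List.range M).map fun k =>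
    ((List.range (N - 1)).map fun t => elemMat N t (w (k + 1) ((t : ℤ) + 1 - r))).prod).prod

/-- The partition `(m_1^{r_1} m_2^{r_2-r_1} ⋯ m_n^{r_n-r_{n-1}})` (corner data 0-based). -/
def stepPart (n : ℕ) (m rr : ℕ → ℕ) : ℕ → ℕ :=
  fun i =>
    if h : (((Finset.range n).filter fun j => i < rr j)).Nonempty then
      m (((Finset.range n).filter fun j => i < rr j).min' h)
    else 0

/-- `Add_{a,b}` (rows 1-based in `a`, `b`; the function argument is 0-based). -/
def AddOp (a b : ℕ) (k : ℕ → ℕ) : ℕ → ℕ := fun i =>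
  if i + 1 ≤ a then k i
  else if i + 1 = a + 1 then k (a - 1)
  else if i + 1 ≤ b + 1 then k (i - 1) + 1
  else k i

/-- `Rem_{a,b}`. -/
def RemOp (a b : ℕ) (k : ℕ → ℕ) : ℕ → ℕ := fun i =>
  if i + 1 < a then k i
  else if i + 1 ≤ b - 1 then k (i + 1) - 1
  else if i + 1 = b then k b
  else k i

/-- `op_{a 0, b 0} ∘ op_{a 1, b 1} ∘ ⋯ ∘ op_{a (t-1), b (t-1)}` applied to `k`. -/
def iterOp (op : ℕ → ℕ → (ℕ → ℕ) → ℕ → ℕ) (t : ℕ) (a b : ℕ → ℕ) (k : ℕ → ℕ) : ℕ → ℕ :=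
  (List.range t).foldr (fun i acc => op (a i) (b i) acc) k

/-- the `i`-th smallest element of a finite set of naturals (0-based). -/
def ascNth (s : Finset ℕ) (i : ℕ) : ℕ := (s.sort (· ≤ ·)).getD i 0

/-- The cells of the skew Young diagram `D(λ/μ)` (0-based, rows `< B`). -/
def cellsD (B : ℕ) (lam mu : ℕ → ℕ) : Finset (ℕ × ℕ) :=
  (Finset.range B ×ˢ Finset.range (lam 0 + 1)).filter fun p => mu p.1 ≤ p.2 ∧ p.2 < lam p.1

/-- Semistandardness: weakly increasing along rows, strictly increasing down columns. -/
def IsSSYT {M B : ℕ} {lam mu : ℕ → ℕ} (T : ↥(cellsD B lam mu) → Fin M) : Prop :=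
  (∀ c c' : ↥(cellsD B lam mu), c.val.1 = c'.val.1 → c.val.2 ≤ c'.val.2 → T c ≤ T c') ∧
  (∀ c c' : ↥(cellsD B lam mu), c.val.1 < c'.val.1 → c.val.2 = c'.val.2 → T c < T c')

open Classical in
/-- Sum over all semistandard tableaux of shape `λ/μ` with entries in `{1,…,M}` of
the product over cells `c` of `f (entry) c`. -/
noncomputable def tabSum {R : Type*} [CommRing R] (M B : ℕ) (lam mu : ℕ → ℕ)
    (f : ℕ → ℕ × ℕ → R) : R :=
  ∑ T ∈ Finset.univ.filter (fun T : ↥(cellsD B lam mu) → Fin M => IsSSYT T),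
    ∏ c : ↥(cellsD B lam mu), f ((T c : ℕ) + 1) c.val

/-- `M`-truncated Schur multiple zeta value for a general filling `s` of the diagram. -/
noncomputable def zetaTF (M B : ℕ) (lam mu : ℕ → ℕ) (s : ℕ × ℕ → ℂ) : ℂ :=
  tabSum M B lam mu fun k c => (k : ℂ) ^ (-(s c))

/-- `M`-truncated diagonally constant Schur multiple zeta value `ζ^M_{λ/μ}(a)`. -/
noncomputable def zetaT (M B : ℕ) (lam mu : ℕ → ℕ) (a : ℤ → ℂ) : ℂ :=
  zetaTF M B lam mu fun c => a ((c.2 : ℤ) - (c.1 : ℤ))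

open Classical in
/-- `ζ^M_{λ/μ}(a)` with the zero convention for non-skew shapes. -/
noncomputable def zetaZ (M B : ℕ) (lam mu : ℕ → ℤ) (a : ℤ → ℂ) : ℂ :=
  if IsSkewZ B lam mu then
    zetaT M B (fun i => (lam i).toNat) (fun i => (mu i).toNat) a else 0

open Classical in
/-- `ζ^M_{λ'/μ'}(a)` applied to conjugates, with the zero convention. -/
noncomputable def zetaZConj (M B : ℕ) (lam mu : ℕ → ℤ) (a : ℤ → ℂ) : ℂ :=
  if IsSkewZ B lam mu then
    zetaT M (lam 0).toNat (conjF (fun i => (lam i).toNat) B)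
      (conjF (fun i => (mu i).toNat) B) a
  else 0

open Classical in
/-- `M`-truncated multiple zeta-star value `ζ^{⋆,M}(s_0,…,s_{d-1})`. -/
noncomputable def zetaStarT (M d : ℕ) (s : ℕ → ℂ) : ℂ :=
  ∑ f ∈ Finset.univ.filter (fun f : Fin d → Fin M => ∀ i j : Fin d, i ≤ j → f i ≤ f j),
    ∏ i : Fin d, (((f i : ℕ) + 1 : ℕ) : ℂ) ^ (-(s i))

open Classical in
/-- `M`-truncated multiple zeta value `ζ^{M}(s_0,…,s_{d-1})`. -/
noncomputable def zetaMT (M d : ℕ) (s : ℕ → ℂ) : ℂ :=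
  ∑ f ∈ Finset.univ.filter (fun f : Fin d → Fin M => ∀ i j : Fin d, i < j → f i < f j),
    ∏ i : Fin d, (((f i : ℕ) + 1 : ℕ) : ℂ) ^ (-(s i))

/-- The Riemann zeta value `ζ(k) = Σ_{n ≥ 1} n^{-k}`. -/
noncomputable def zetaVal (k : ℕ) : ℂ := ∑' n : ℕ, ((n + 1 : ℕ) : ℂ) ^ (-(k : ℤ))

/-- `ζ^⋆(1,k) = Σ_{1 ≤ m ≤ n} m^{-1} n^{-k}`. -/
noncomputable def zetaStarOne (k : ℕ) : ℂ :=
  ∑' n : ℕ, (∑ m ∈ Finset.Icc 1 (n + 1), ((m : ℂ))⁻¹) * ((n + 1 : ℕ) : ℂ) ^ (-(k : ℤ))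

section Helpers
variable {R : Type*} [CommRing R]

lemma det_updCol_zero_eq_sum {n : ℕ} (w : Matrix (Fin (n+1)) (Fin (n+1)) R)
    (x : Fin (n+1) → R) :
    (w.updateCol 0 x).det
      = ∑ i : Fin (n+1), x i * ((-1)^(i:ℕ) * (w.submatrix i.succAbove Fin.succ).det) := by
  rw [Matrix.det_succ_column_zero]
  refine Finset.sum_congr rfl fun i _ => ?_
  have h1 : (w.updateCol 0 x) i 0 = x i := by simp [Matrix.updateCol_apply]
  have h2 : (w.updateCol 0 x).submatrix i.succAbove Fin.succ
      = w.submatrix i.succAbove Fin.succ := by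
    ext a b
    simp [Matrix.submatrix_apply, Matrix.updateCol_apply, Fin.succ_ne_zero b]
  rw [h1, h2]; ring

lemma pluckerL {n : ℕ} (v : Fin (n+2) → Fin (n+1) → R)
    (w : Matrix (Fin (n+1)) (Fin (n+1)) R) :
    ∑ k : Fin (n+2), (-1)^(k:ℕ) * (w.updateCol 0 (v k)).det
        * (Matrix.of fun i j : Fin (n+1) => v (k.succAbove j) i).det = 0 := by
  set cof : Fin (n+1) → R := fun i => (-1)^(i:ℕ) * (w.submatrix i.succAbove Fin.succ).det with hcof
  set M₀ : Matrix (Fin (n+2)) (Fin (n+2)) R :=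
    Matrix.of fun k j => Fin.cases 0 (fun j' => v k j') j with hM₀
  set c : Fin (n+2) → R := Fin.cases 0 cof with hc
  set M : Matrix (Fin (n+2)) (Fin (n+2)) R :=
    M₀.updateCol 0 (fun k => ∑ i, c i • M₀ k i) with hM
  have hMdet : M.det = 0 := by
    rw [hM, Matrix.det_updateCol_sum]
    simp [hc]
  have hentry : ∀ k, M k 0 = (w.updateCol 0 (v k)).det := by
    intro k
    have : M k 0 = ∑ i, c i • M₀ k i := by
      rw [hM]; simp [Matrix.updateCol_apply]
    rw [this, Fin.sum_univ_succ, det_updCol_zero_eq_sum]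
    simp only [hc, hM₀, Fin.cases_zero, zero_smul, zero_add, Fin.cases_succ,
      Matrix.of_apply, smul_eq_mul]
    rw [zero_mul, zero_add]
    exact Finset.sum_congr rfl fun i _ => mul_comm _ _
  have hsub : ∀ k : Fin (n+2), (M.submatrix k.succAbove Fin.succ).det
      = (Matrix.of fun i j : Fin (n+1) => v (k.succAbove j) i).det := by
    intro k
    rw [← Matrix.det_transpose (Matrix.of fun i j : Fin (n+1) => v (k.succAbove j) i)]
    congr 1
  calc ∑ k : Fin (n+2), (-1)^(k:ℕ) * (w.updateCol 0 (v k)).det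
        * (Matrix.of fun i j : Fin (n+1) => v (k.succAbove j) i).det
      = ∑ k : Fin (n+2), (-1)^(k:ℕ) * M k 0 * (M.submatrix k.succAbove Fin.succ).det := by
        refine Finset.sum_congr rfl fun k _ => ?_
        rw [hentry, hsub]
    _ = M.det := (Matrix.det_succ_column_zero M).symm
    _ = 0 := hMdet

end Helpers

def Vx {R : Type*} [CommRing R] {N : ℕ} (U : Matrix (Fin N) (Fin N) R) (srow : ℕ) :
    ℕ → ℕ → R := fun i cc => if cc = N then (if i = srow then 1 else 0) else matExt U i cc

section Bridge
variable {R : Type*} [CommRing R] {N : ℕ} (U : Matrix (Fin N) (Fin N) R)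

lemma schurNoStar (srow r : ℕ) (lam : ℕ → ℕ) (g : Fin r → ℕ)
    (hg : ∀ j : Fin r, g j = maya lam r j) (hlt : ∀ j, g j < N) :
    (Matrix.of fun i j : Fin r => Vx U srow (i : ℕ) (g j)).det
      = SchurV U r lam (fun _ => 0) := by
  unfold SchurV
  congr 1
  ext i j
  simp only [Matrix.of_apply]
  rw [hg j]
  have h1 : maya lam r j ≠ N := by have := hlt j; rw [hg j] at this; omega
  have h2 : maya (fun _ => 0) r i = (i : ℕ) := by simp [maya]
  rw [h2]
  simp only [Vx, if_neg h1]

lemma schurStar (s : ℕ) (lam : ℕ → ℕ) (g : Fin (s+1) → ℕ)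
    (hg : ∀ j : Fin s, g j.castSucc = maya lam s j) (hlast : g (Fin.last s) = N)
    (hlt : ∀ j : Fin s, g j.castSucc < N) :
    (Matrix.of fun i j : Fin (s+1) => Vx U s (i : ℕ) (g j)).det
      = SchurV U s lam (fun _ => 0) := by
  rw [Matrix.det_succ_column _ (Fin.last s)]
  rw [Finset.sum_eq_single (Fin.last s)]
  · have h1 : (Matrix.of fun i j : Fin (s+1) => Vx U s (i : ℕ) (g j)) (Fin.last s) (Fin.last s)
        = 1 := by
      simp [hlast, Vx]
    rw [h1]
    have h2 : ((-1 : R)) ^ ((Fin.last s : ℕ) + (Fin.last s : ℕ)) = 1 := by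
      rw [Fin.val_last]
      exact Even.neg_one_pow ⟨s, rfl⟩
    rw [h2]
    simp only [one_mul, mul_one]
    have h3 : ((Matrix.of fun i j : Fin (s+1) => Vx U s (i : ℕ) (g j)).submatrix
        (Fin.last s).succAbove (Fin.last s).succAbove)
        = Matrix.of fun i j : Fin s => Vx U s (i : ℕ) (g j.castSucc) := by
      ext i j
      simp [Fin.succAbove_last]
    rw [h3]
    exact schurNoStar U s s lam (fun j => g j.castSucc) hg hlt
  · intro i _ hi
    have hieq : (i : ℕ) ≠ s := fun h => hi (Fin.ext (by simpa using h))
    have h0 : (Matrix.of fun i j : Fin (s+1) => Vx U s (i : ℕ) (g j)) i (Fin.last s) = 0 := by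
      simp [hlast, Vx, matExt, hieq]
    rw [h0]; ring
  · intro h; exact absurd (Finset.mem_univ _) h

lemma colPerm {n : ℕ} (A B : Matrix (Fin (n+1)) (Fin (n+1)) R)
    (m : Fin (n+1)) (h : B = A.submatrix id (Fin.cycleRange m)) :
    A.det = (-1) ^ (m : ℕ) * B.det := by
  subst h
  rw [Matrix.det_permute', Fin.sign_cycleRange]
  have : ((((-1 : ℤˣ) ^ (m : ℕ) : ℤˣ) : ℤ) : R) = (-1 : R) ^ (m : ℕ) := by
    push_cast
    rfl
  rw [this, ← mul_assoc, ← pow_add]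
  rw [Even.neg_one_pow ⟨(m : ℕ), rfl⟩, one_mul]

end Bridge

lemma cycleRange_val {n : ℕ} (m j : Fin (n+1)) :
    ((Fin.cycleRange m j) : ℕ)
      = if (j:ℕ) < (m:ℕ) then (j:ℕ)+1 else if (j:ℕ) = (m:ℕ) then 0 else (j:ℕ) := by
  rcases lt_trichotomy j m with h | h | h
  · rw [Fin.coe_cycleRange_of_lt h, if_pos (by exact h)]
  · subst h; rw [Fin.cycleRange_self]; simp
  · rw [Fin.cycleRange_of_gt h, if_neg, if_neg] <;> (rw [Fin.lt_def] at h; omega)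

lemma succAbove_val {n : ℕ} (k : Fin (n+1)) (j : Fin n) :
    ((k.succAbove j : Fin (n+1)) : ℕ) = if (j:ℕ) < (k:ℕ) then (j:ℕ) else (j:ℕ)+1 := by
  rcases lt_or_ge (j.castSucc) k with h | h
  · rw [Fin.succAbove_of_castSucc_lt _ _ h, Fin.coe_castSucc,
      if_pos (by rw [Fin.lt_def] at h; simpa using h)]
  · rw [Fin.succAbove_of_le_castSucc _ _ h, Fin.val_succ,
      if_neg (by have := Fin.le_def.mp h; simp only [Fin.coe_castSucc] at this; omega)]

/-- column enumeration for the (r+1)-element set K -/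
def kap (N c p s : ℕ) : ℕ → ℕ :=
  fun k => if k < s+1-p then k else if k < s+1 then c+k else N

/-- column enumeration for the (r-1)-element set J -/
def iot (c e p s : ℕ) : ℕ → ℕ := fun j => if j < s-p then j else (c+e+2)+j

def wM {R : Type*} [CommRing R] {N : ℕ} (U : Matrix (Fin N) (Fin N) R) (c e p s : ℕ) :
    Matrix (Fin (s+1)) (Fin (s+1)) R :=
  Matrix.of fun i j => if (j:ℕ) = 0 then (0:R) else Vx U s (i:ℕ) (iot c e p s ((j:ℕ)-1))

def vC {R : Type*} [CommRing R] {N : ℕ} (U : Matrix (Fin N) (Fin N) R) (c p s : ℕ) :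
    Fin (s+2) → Fin (s+1) → R := fun k i => Vx U s (i:ℕ) (kap N c p s (k:ℕ))

section Main
variable {R : Type*} [CommRing R] {N : ℕ} (U : Matrix (Fin N) (Fin N) R) (c e p s : ℕ)

lemma updEntry (k : Fin (s+2)) (i : Fin (s+1)) (j' : Fin (s+1)) :
    ((wM U c e p s).updateCol 0 (vC U c p s k)) i j'
      = if (j':ℕ) = 0 then Vx U s (i:ℕ) (kap N c p s (k:ℕ))
        else Vx U s (i:ℕ) (iot c e p s ((j':ℕ)-1)) := by
  rw [Matrix.updateCol_apply]
  by_cases h : j' = 0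
  · subst h; simp [vC]
  · have hv : ¬ (j':ℕ) = 0 := fun h' => h (Fin.ext h')
    rw [if_neg h, if_neg hv]
    simp [wM, hv, h]

lemma D_low (hps : p + 1 ≤ s) (k : Fin (s+2)) (hk : (k:ℕ) < s - p) :
    ((wM U c e p s).updateCol 0 (vC U c p s k)).det = 0 := by
  have hj : ((k:ℕ)+1) < s + 1 := by omega
  apply Matrix.det_zero_of_column_eq (i := (0 : Fin (s+1))) (j := ⟨(k:ℕ)+1, hj⟩)
  · exact fun h => by simpa using congrArg Fin.val h
  · intro i
    rw [updEntry, updEntry]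
    rw [if_pos (show ((0 : Fin (s+1)):ℕ) = 0 from rfl),
      if_neg (show ¬((⟨(k:ℕ)+1, hj⟩ : Fin (s+1)):ℕ) = 0 from by simp)]
    congr 1
    simp only [kap, iot]
    rw [if_pos (by omega : (k:ℕ) < s+1-p)]
    split_ifs <;> first | (exfalso; first | assumption | omega) | omega

lemma D_high (hps : p + 1 ≤ s) (k : Fin (s+2)) (hk1 : s-p+e+2 ≤ (k:ℕ)) (hk2 : (k:ℕ) ≤ s) :
    ((wM U c e p s).updateCol 0 (vC U c p s k)).det = 0 := by
  have hj : ((k:ℕ) - (e+2) + 1) < s + 1 := by omega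
  apply Matrix.det_zero_of_column_eq (i := (0 : Fin (s+1))) (j := ⟨(k:ℕ)-(e+2)+1, hj⟩)
  · exact fun h => by simpa using congrArg Fin.val h
  · intro i
    rw [updEntry, updEntry]
    rw [if_pos (show ((0 : Fin (s+1)):ℕ) = 0 from rfl),
      if_neg (show ¬((⟨(k:ℕ)-(e+2)+1, hj⟩ : Fin (s+1)):ℕ) = 0 from by simp)]
    congr 1
    simp only [kap, iot]
    split_ifs <;> first | (exfalso; first | assumption | omega) | omega

lemma D_B (hps : p + 1 ≤ s) (hNd : c + e + 2 + s + 1 ≤ N)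
    (k : Fin (s+2)) (hkv : (k:ℕ) = s - p) :
    ((wM U c e p s).updateCol 0 (vC U c p s k)).det
      = (-1:R)^(s-p) * SchurV U (s+1) (rectP p (c+e+1)) (fun _ => 0) := by
  have hm : s - p < s + 1 := by omega
  have hmv : ((⟨s-p, hm⟩ : Fin (s+1)) : ℕ) = s - p := rfl
  have hsub : (Matrix.of fun i j : Fin (s+1) =>
        Vx U s (i:ℕ) (if (j:ℕ) < s+1-p then (j:ℕ) else (c+e+1)+(j:ℕ)))
      = ((wM U c e p s).updateCol 0 (vC U c p s k)).submatrix id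
          (Fin.cycleRange ⟨s-p, hm⟩) := by
    ext i j
    have hj := j.isLt
    rw [Matrix.submatrix_apply, id_eq, updEntry, cycleRange_val, hmv]
    simp only [Matrix.of_apply, kap, iot, hkv]
    split_ifs <;> first | rfl | (exfalso; first | assumption | omega) | (congr 1 <;> omega) | omega
  rw [colPerm ((wM U c e p s).updateCol 0 (vC U c p s k)) _ ⟨s-p, hm⟩ hsub]
  rw [hmv]
  congr 1
  refine schurNoStar U s (s+1) (rectP p (c+e+1)) _ (fun j => ?_) (fun j => ?_)
  · have := j.isLt
    simp only [maya, rectP]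
    split_ifs <;> first | (exfalso; first | assumption | omega) | omega
  · have := j.isLt
    split_ifs <;> first | (exfalso; first | assumption | omega) | omega

lemma D_mid (hps : p + 1 ≤ s) (hNd : c + e + 2 + s + 1 ≤ N) (t : ℕ) (ht : t ≤ e)
    (hep : e + 2 ≤ p + 1)
    (k : Fin (s+2)) (hkv : (k:ℕ) = s + 1 - p + t) :
    ((wM U c e p s).updateCol 0 (vC U c p s k)).det
      = (-1:R)^(s-p) * SchurV U (s+1) (rectLowP p (c+e+1) (c+t+1)) (fun _ => 0) := by
  have hm : s - p < s + 1 := by omega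
  have hmv : ((⟨s-p, hm⟩ : Fin (s+1)) : ℕ) = s - p := rfl
  have hsub : (Matrix.of fun i j : Fin (s+1) =>
        Vx U s (i:ℕ) (if (j:ℕ) < s-p then (j:ℕ)
          else if (j:ℕ) = s-p then c+(s+1-p)+t else (c+e+1)+(j:ℕ)))
      = ((wM U c e p s).updateCol 0 (vC U c p s k)).submatrix id
          (Fin.cycleRange ⟨s-p, hm⟩) := by
    ext i j
    have hj := j.isLt
    rw [Matrix.submatrix_apply, id_eq, updEntry, cycleRange_val, hmv]
    simp only [Matrix.of_apply, kap, iot, hkv]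
    split_ifs <;> first | rfl | (exfalso; first | assumption | omega) | (congr 1 <;> omega) | omega
  rw [colPerm ((wM U c e p s).updateCol 0 (vC U c p s k)) _ ⟨s-p, hm⟩ hsub]
  rw [hmv]
  congr 1
  refine schurNoStar U s (s+1) (rectLowP p (c+e+1) (c+t+1)) _ (fun j => ?_) (fun j => ?_)
  · have := j.isLt
    simp only [maya, rectLowP]
    split_ifs <;> first | (exfalso; first | assumption | omega) | omega
  · have := j.isLt
    split_ifs <;> first | (exfalso; first | assumption | omega) | omega

lemma D_last (hps : p + 1 ≤ s) (hNd : c + e + 2 + s + 1 ≤ N)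
    (k : Fin (s+2)) (hkv : (k:ℕ) = s + 1) :
    ((wM U c e p s).updateCol 0 (vC U c p s k)).det
      = (-1:R)^s * SchurV U s (rectP p (c+e+2)) (fun _ => 0) := by
  have hm : s < s + 1 := by omega
  have hmv : ((⟨s, hm⟩ : Fin (s+1)) : ℕ) = s := rfl
  have hsub : (Matrix.of fun i j : Fin (s+1) =>
        Vx U s (i:ℕ) (if (j:ℕ) < s-p then (j:ℕ)
          else if (j:ℕ) < s then (c+e+2)+(j:ℕ) else N))
      = ((wM U c e p s).updateCol 0 (vC U c p s k)).submatrix id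
          (Fin.cycleRange ⟨s, hm⟩) := by
    ext i j
    have hj := j.isLt
    rw [Matrix.submatrix_apply, id_eq, updEntry, cycleRange_val, hmv]
    simp only [Matrix.of_apply, kap, iot, hkv]
    split_ifs <;> first | rfl | (exfalso; first | assumption | omega) | (congr 1 <;> omega) | omega
  rw [colPerm ((wM U c e p s).updateCol 0 (vC U c p s k)) _ ⟨s, hm⟩ hsub]
  rw [hmv]
  congr 1
  refine schurStar U s (rectP p (c+e+2)) _ ?_ ?_ ?_
  · intro j
    have := j.isLt
    simp only [maya, rectP, Fin.coe_castSucc]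
    split_ifs <;> first | (exfalso; first | assumption | omega) | omega
  · simp only [Fin.val_last]
    rw [if_neg (by omega), if_neg (by omega)]
  · intro j
    have := j.isLt
    simp only [Fin.coe_castSucc]
    split_ifs <;> first | (exfalso; first | assumption | omega) | omega

lemma E_B (hps : p + 1 ≤ s) (hNd : c + e + 2 + s + 1 ≤ N)
    (k : Fin (s+2)) (hkv : (k:ℕ) = s - p) :
    (Matrix.of fun i j : Fin (s+1) => vC U c p s (k.succAbove j) i).det
      = SchurV U s (rectP p (c+1)) (fun _ => 0) := by
  refine schurStar U s (rectP p (c+1))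
    (fun j => kap N c p s ((k.succAbove j : Fin (s+2)) : ℕ)) ?_ ?_ ?_
  · intro j
    have := j.isLt
    rw [succAbove_val, hkv]
    simp only [kap, maya, rectP, Fin.coe_castSucc]
    split_ifs <;> first | (exfalso; first | assumption | omega) | omega
  · rw [succAbove_val, hkv]
    simp only [Fin.val_last, kap]
    split_ifs <;> first | rfl | (exfalso; first | assumption | omega) | omega
  · intro j
    have := j.isLt
    rw [succAbove_val, hkv]
    simp only [kap, Fin.coe_castSucc]
    split_ifs <;> first | (exfalso; first | assumption | omega) | omega

lemma E_mid (hps : p + 1 ≤ s) (hNd : c + e + 2 + s + 1 ≤ N) (t : ℕ) (ht : t ≤ e)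
    (hep : e + 2 ≤ p + 1)
    (k : Fin (s+2)) (hkv : (k:ℕ) = s + 1 - p + t) :
    (Matrix.of fun i j : Fin (s+1) => vC U c p s (k.succAbove j) i).det
      = SchurV U s (rectUpP (p-1) c (p-t-1)) (fun _ => 0) := by
  refine schurStar U s (rectUpP (p-1) c (p-t-1))
    (fun j => kap N c p s ((k.succAbove j : Fin (s+2)) : ℕ)) ?_ ?_ ?_
  · intro j
    have := j.isLt
    rw [succAbove_val, hkv]
    simp only [kap, maya, rectUpP, Fin.coe_castSucc]
    split_ifs <;> first | (exfalso; first | assumption | omega) | omega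
  · rw [succAbove_val, hkv]
    simp only [Fin.val_last, kap]
    split_ifs <;> first | rfl | (exfalso; first | assumption | omega) | omega
  · intro j
    have := j.isLt
    rw [succAbove_val, hkv]
    simp only [kap, Fin.coe_castSucc]
    split_ifs <;> first | (exfalso; first | assumption | omega) | omega

lemma E_last (hps : p + 1 ≤ s) (hNd : c + e + 2 + s + 1 ≤ N)
    (k : Fin (s+2)) (hkv : (k:ℕ) = s + 1) :
    (Matrix.of fun i j : Fin (s+1) => vC U c p s (k.succAbove j) i).det
      = SchurV U (s+1) (rectP p c) (fun _ => 0) := by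
  refine schurNoStar U s (s+1) (rectP p c)
    (fun j => kap N c p s ((k.succAbove j : Fin (s+2)) : ℕ)) ?_ ?_
  · intro j
    have := j.isLt
    rw [succAbove_val, hkv]
    simp only [kap, maya, rectP]
    split_ifs <;> first | (exfalso; first | assumption | omega) | omega
  · intro j
    have := j.isLt
    rw [succAbove_val, hkv]
    simp only [kap]
    split_ifs <;> first | (exfalso; first | assumption | omega) | omega

lemma rectLow_top (hps : p + 1 ≤ s) :
    SchurV U (s+1) (rectLowP p (c+e+1) (c+e+1)) (fun _ => 0)
      = SchurV U (s+1) (rectP (p+1) (c+e+1)) (fun _ => 0) := by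
  unfold SchurV
  congr 1
  ext i j
  simp only [Matrix.of_apply]
  congr 1
  simp only [maya, rectLowP, rectP]
  split_ifs <;> first | (exfalso; first | assumption | omega) | omega

end Main

def Gf {R : Type*} [CommRing R] {N : ℕ} (U : Matrix (Fin N) (Fin N) R) (c e p s : ℕ) :
    ℕ → R := fun k =>
  if k = s+1 then
    -(SchurV U (s+1) (rectP p c) (fun _ => 0) * SchurV U s (rectP p (c+e+2)) (fun _ => 0))
  else if k = s-p then
    SchurV U (s+1) (rectP p (c+e+1)) (fun _ => 0) * SchurV U s (rectP p (c+1)) (fun _ => 0)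
  else if k < s+1-p then 0
  else if k ≤ s-p+(e+1) then
    (-1:R)^(k-(s+1-p)+1) * (SchurV U (s+1) (rectLowP p (c+e+1) (c+(k-(s+1-p))+1)) (fun _ => 0)
      * SchurV U s (rectUpP (p-1) c (p-(k-(s+1-p))-1)) (fun _ => 0))
  else 0

theorem auxRect {R : Type*} [CommRing R] {N : ℕ} (U : Matrix (Fin N) (Fin N) R)
    (c e p s : ℕ) (hps : p + 1 ≤ s) (hep : e + 2 ≤ p + 1) (hNd : c + e + 2 + s + 1 ≤ N) :
    (-1:R)^(e+2) * (SchurV U (s+1) (rectP (p+1) (c+e+1)) (fun _ => 0)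
        * SchurV U s (rectUpP (p-1) c (p-1-e)) (fun _ => 0))
      = SchurV U (s+1) (rectP p (c+e+1)) (fun _ => 0) * SchurV U s (rectP p (c+1)) (fun _ => 0)
        - SchurV U (s+1) (rectP p c) (fun _ => 0) * SchurV U s (rectP p (c+e+2)) (fun _ => 0)
        + ∑ t ∈ Finset.range e, (-1:R)^(t+1)
            * (SchurV U (s+1) (rectLowP p (c+e+1) (c+t+1)) (fun _ => 0)
              * SchurV U s (rectUpP (p-1) c (p-t-1)) (fun _ => 0)) := by
  have hP := pluckerL (vC U c p s) (wM U c e p s)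
  have hterm : ∀ k : Fin (s+2),
      (-1:R)^(k:ℕ) * ((wM U c e p s).updateCol 0 (vC U c p s k)).det
        * (Matrix.of fun i j : Fin (s+1) => vC U c p s (k.succAbove j) i).det
      = Gf U c e p s (k:ℕ) := by
    intro k
    have hk := k.isLt
    by_cases h1 : (k:ℕ) = s+1
    · rw [D_last U c e p s hps hNd k h1, E_last U c e p s hps hNd k h1, h1]
      unfold Gf
      rw [if_pos rfl]
      have hsgn : ((-1:R))^(s+1) * (-1)^s = -1 := by
        rw [← pow_add, show s+1+s = 2*s+1 by omega, pow_succ, pow_mul, neg_one_sq, one_pow,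
          one_mul]
      set X := SchurV U (s+1) (rectP p c) (fun _ => 0)
      set Y := SchurV U s (rectP p (c+e+2)) (fun _ => 0)
      linear_combination (X * Y) * hsgn
    · by_cases h2 : (k:ℕ) = s-p
      · rw [D_B U c e p s hps hNd k h2, E_B U c e p s hps hNd k h2, h2]
        unfold Gf
        rw [if_neg (by omega : ¬ s - p = s + 1), if_pos rfl]
        have hsgn : ((-1:R))^(s-p) * (-1)^(s-p) = 1 := by
          rw [← pow_add]; exact Even.neg_one_pow ⟨s-p, rfl⟩
        set X := SchurV U (s+1) (rectP p (c+e+1)) (fun _ => 0)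
        set Y := SchurV U s (rectP p (c+1)) (fun _ => 0)
        linear_combination (X * Y) * hsgn
      · by_cases h3 : (k:ℕ) < s-p
        · rw [D_low U c e p s hps k h3]
          unfold Gf
          rw [if_neg h1, if_neg h2, if_pos (by omega)]
          ring
        · by_cases h4 : (k:ℕ) ≤ s-p+(e+1)
          · have ht : (k:ℕ) - (s+1-p) ≤ e := by omega
            have hkv : (k:ℕ) = s+1-p + ((k:ℕ) - (s+1-p)) := by omega
            rw [D_mid U c e p s hps hNd _ ht hep k hkv,
              E_mid U c e p s hps hNd _ ht hep k hkv]
            unfold Gf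
            rw [if_neg h1, if_neg h2, if_neg (by omega), if_pos h4]
            set t := (k:ℕ) - (s+1-p) with hT
            have hsgn : ((-1:R))^(k:ℕ) * (-1)^(s-p) = (-1)^(t+1) := by
              rw [← pow_add, show (k:ℕ) + (s-p) = 2*(s-p) + (t+1) by omega, pow_add, pow_mul,
                neg_one_sq, one_pow, one_mul]
            set X := SchurV U (s+1) (rectLowP p (c+e+1) (c+t+1)) (fun _ => 0)
            set Y := SchurV U s (rectUpP (p-1) c (p-t-1)) (fun _ => 0)
            linear_combination (X * Y) * hsgn
          · rw [D_high U c e p s hps k (by omega) (by omega)]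
            unfold Gf
            rw [if_neg h1, if_neg h2, if_neg (by omega), if_neg (by omega)]
            ring
  have hsum0 : ∑ k ∈ Finset.range (s+2), Gf U c e p s k = 0 := by
    rw [← Fin.sum_univ_eq_sum_range (fun k => Gf U c e p s k) (s+2)]
    calc ∑ k : Fin (s+2), Gf U c e p s (k:ℕ)
        = ∑ k : Fin (s+2), (-1:R)^(k:ℕ) * ((wM U c e p s).updateCol 0 (vC U c p s k)).det
          * (Matrix.of fun i j : Fin (s+1) => vC U c p s (k.succAbove j) i).det :=
          Finset.sum_congr rfl (fun k _ => (hterm k).symm)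
      _ = 0 := hP
  rw [Finset.sum_range_succ] at hsum0
  have hsupp : ∑ k ∈ Finset.range (s+1), Gf U c e p s k
      = ∑ k ∈ Finset.Ico (s-p) (s-p+(e+1)+1), Gf U c e p s k := by
    refine (Finset.sum_subset ?_ ?_).symm
    · intro x hx
      rw [Finset.mem_Ico] at hx
      rw [Finset.mem_range]
      omega
    · intro x hx hxn
      rw [Finset.mem_range] at hx
      rw [Finset.mem_Ico] at hxn
      unfold Gf
      rw [if_neg (by omega : ¬ x = s + 1), if_neg (by omega : ¬ x = s - p)]
      by_cases hx1 : x < s+1-p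
      · rw [if_pos hx1]
      · rw [if_neg hx1, if_neg (by omega)]
  rw [hsupp] at hsum0
  rw [Finset.sum_Ico_succ_top (by omega : s-p ≤ s-p+(e+1))] at hsum0
  rw [Finset.sum_eq_sum_Ico_succ_bot (by omega : s-p < s-p+(e+1))] at hsum0
  rw [Finset.sum_Ico_eq_sum_range] at hsum0
  rw [show s-p+(e+1) - (s-p+1) = e by omega] at hsum0
  have hGb : Gf U c e p s (s-p)
      = SchurV U (s+1) (rectP p (c+e+1)) (fun _ => 0)
        * SchurV U s (rectP p (c+1)) (fun _ => 0) := by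
    unfold Gf
    rw [if_neg (by omega : ¬ s - p = s + 1), if_pos rfl]
  have hGtop : Gf U c e p s (s-p+(e+1))
      = (-1:R)^(e+1) * (SchurV U (s+1) (rectP (p+1) (c+e+1)) (fun _ => 0)
          * SchurV U s (rectUpP (p-1) c (p-1-e)) (fun _ => 0)) := by
    unfold Gf
    rw [if_neg (by omega : ¬ s - p + (e+1) = s + 1), if_neg (by omega : ¬ s - p + (e+1) = s - p),
      if_neg (by omega : ¬ s - p + (e+1) < s + 1 - p), if_pos (le_refl _)]
    rw [show s-p+(e+1) - (s+1-p) = e by omega]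
    rw [rectLow_top U c e p s hps]
    rw [show p-e-1 = p-1-e by omega]
  have hGt : ∀ t ∈ Finset.range e, Gf U c e p s (s-p+1+t)
      = (-1:R)^(t+1) * (SchurV U (s+1) (rectLowP p (c+e+1) (c+t+1)) (fun _ => 0)
          * SchurV U s (rectUpP (p-1) c (p-t-1)) (fun _ => 0)) := by
    intro t htr
    rw [Finset.mem_range] at htr
    unfold Gf
    rw [if_neg (by omega : ¬ s - p + 1 + t = s + 1), if_neg (by omega : ¬ s - p + 1 + t = s - p),
      if_neg (by omega : ¬ s - p + 1 + t < s + 1 - p), if_pos (by omega : s - p + 1 + t ≤ s - p + (e+1))]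
    rw [show s-p+1+t - (s+1-p) = t by omega]
  have hG1 : Gf U c e p s (s+1)
      = -(SchurV U (s+1) (rectP p c) (fun _ => 0)
          * SchurV U s (rectP p (c+e+2)) (fun _ => 0)) := by
    unfold Gf
    rw [if_pos rfl]
  rw [Finset.sum_congr rfl hGt, hGb, hGtop, hG1] at hsum0
  linear_combination -hsum0

/-- General rectangle relation (Theorem 4.4). -/
theorem rectangle_relation_general {R : Type*} [CommRing R] {N : ℕ} (hN : 0 < N)
    (U : Matrix (Fin N) (Fin N) R) (hU : UpperUni U)
    (p q a b r : ℕ) (hp : 1 ≤ p) (hq : 1 ≤ q)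
    (ha : a ≤ q) (hab2 : 2 ≤ a + b) (habp : a + b ≤ p + 1)
    (hr : p + 1 ≤ r - 1) (hrN : r ≤ N) (hwid : q + b ≤ N - r) :
    (-1 : R) ^ (a + b) *
        (SchurV U r (rectP (p + 1) (q + b - 1)) (fun _ => 0) *
          SchurV U (r - 1) (rectUpP (p - 1) (q - a) (p + 1 - (a + b))) (fun _ => 0)) =
      SchurV U r (rectP p (q + b - 1)) (fun _ => 0) *
          SchurV U (r - 1) (rectP p (q - a + 1)) (fun _ => 0) -
        SchurV U r (rectP p (q - a)) (fun _ => 0) *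
          SchurV U (r - 1) (rectP p (q + b)) (fun _ => 0) +
        ∑ t ∈ Finset.range (a + b - 2),
          (-1 : R) ^ (t + 1) *
            (SchurV U r (rectLowP p (q + b - 1) (q - a + t + 1)) (fun _ => 0) *
              SchurV U (r - 1) (rectUpP (p - 1) (q - a) (p - t - 1)) (fun _ => 0)) := by
  obtain ⟨s, rfl⟩ : ∃ s, r = s + 1 := ⟨r - 1, by omega⟩
  simp only [Nat.add_sub_cancel]
  have H := auxRect U (q - a) (a + b - 2) p s (by omega) (by omega) (by omega)
  rw [show (a + b - 2) + 2 = a + b by omega] at H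
  rw [show q - a + (a + b - 2) + 1 = q + b - 1 by omega] at H
  rw [show q - a + (a + b - 2) + 2 = q + b by omega] at H
  rw [show p - 1 - (a + b - 2) = p + 1 - (a + b) by omega] at H
  exact H
end

section
/- Two-row Schur multiple zeta values as differences of products of multiple zeta-star values: Let a, c ≥ 0 be integers, let λ = ((a+c+2)^2) be the rectangular partition with two rows of length a+c+2, and let s be the filling of D(λ) given by s_{1,j} = 1 for 1 ≤ j ≤ a and s_{1,j} = 2 for a+1 ≤ j ≤ a+c+2 in the first row, and s_{2,j} = 1 for 1 ≤ j ≤ a+1 and s_{2,j} = 2 for a+2 ≤ j ≤ a+c+2 in the second row. Then the limit lim_{M→∞} ζ^M_{λ}(s) exists and equals ζ^⋆({1}^{a+1},{2}^{c+1}) · ζ^⋆({1}^{a},{2}^{c+2}) − ζ^⋆({1}^{a+1},{2}^{c+2}) · ζ^⋆({1}^{a},{2}^{c+1}), where all four multiple zeta-star series converge. -/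
open Matrix BigOperators Finset Filter

noncomputable section TwoRowAux

/-- pad a Fin-tuple to `ℕ → ℕ` with zeros. -/
def padT {M d : ℕ} (f : Fin d → Fin M) : ℕ → ℕ :=
  fun i => if h : i < d then (f ⟨i, h⟩ : ℕ) else 0

open Classical in
/-- monotone `d`-tuples with values in `[0, M)`, as 0-padded functions `ℕ → ℕ`. -/
noncomputable def monoS (M d : ℕ) : Finset (ℕ → ℕ) :=
  (Finset.univ.filter (fun f : Fin d → Fin M => ∀ i j : Fin d, i ≤ j → f i ≤ f j)).image padT

lemma mem_monoS {M d : ℕ} {g : ℕ → ℕ} :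
    g ∈ monoS M d ↔ ((∀ i j : ℕ, i ≤ j → j < d → g i ≤ g j) ∧ (∀ i, i < d → g i < M)
      ∧ (∀ i, d ≤ i → g i = 0)) := by
  classical
  constructor
  · rintro hg
    simp only [monoS, Finset.mem_image, Finset.mem_filter] at hg
    obtain ⟨f, ⟨-, hmono⟩, rfl⟩ := hg
    refine ⟨?_, ?_, ?_⟩
    · intro i j hij hj
      have hi : i < d := lt_of_le_of_lt hij hj
      simp only [padT, dif_pos hi, dif_pos hj]
      exact_mod_cast hmono ⟨i, hi⟩ ⟨j, hj⟩ hij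
    · intro i hi; simp only [padT, dif_pos hi]; exact (f ⟨i, hi⟩).isLt
    · intro i hi; simp only [padT, dif_neg (by omega : ¬ i < d)]
  · rintro ⟨h1, h2, h3⟩
    simp only [monoS, Finset.mem_image, Finset.mem_filter]
    refine ⟨fun i => ⟨g i, h2 i i.isLt⟩, ⟨Finset.mem_univ _, ?_⟩, ?_⟩
    · intro i j hij; exact h1 i j hij j.isLt
    · funext i
      by_cases h : i < d
      · simp [padT, h]
      · simp [padT, h, h3 i (by omega)]

lemma padT_injOn {M d : ℕ} : ∀ f ∈ (Finset.univ.filter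
    (fun f : Fin d → Fin M => ∀ i j : Fin d, i ≤ j → f i ≤ f j)),
    ∀ f' ∈ (Finset.univ.filter
    (fun f : Fin d → Fin M => ∀ i j : Fin d, i ≤ j → f i ≤ f j)),
    padT f = padT f' → f = f' := by
  intro f _ f' _ h
  funext i
  have := congrFun h i
  simp only [padT, dif_pos i.isLt] at this
  exact Fin.ext (by simpa using this)

/-- transfer `zetaStarT` to the padded world. -/
lemma zetaStarT_eq_monoS (M d : ℕ) (s : ℕ → ℂ) :
    zetaStarT M d s = ∑ g ∈ monoS M d, ∏ i ∈ Finset.range d, ((g i + 1 : ℕ) : ℂ) ^ (-(s i)) := by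
  classical
  rw [zetaStarT, monoS, Finset.sum_image padT_injOn]
  apply Finset.sum_congr (by congr 1)
  intro f _
  rw [← Fin.prod_univ_eq_prod_range (fun i => ((padT f i + 1 : ℕ) : ℂ) ^ (-(s i))) d]
  apply Finset.prod_congr rfl
  intro i _
  simp [padT, i.isLt]

end TwoRowAux

section Bij

/-- least crossing index (clamped at `n`). -/
def jj (n : ℕ) (q p : ℕ → ℕ) : ℕ :=
  Nat.find (⟨n, Or.inl le_rfl⟩ : ∃ j, n ≤ j ∨ q j ≤ p j)

lemma jj_le (n : ℕ) (q p : ℕ → ℕ) : jj n q p ≤ n := Nat.find_le (Or.inl le_rfl)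

lemma jj_spec (n : ℕ) (q p : ℕ → ℕ) : n ≤ jj n q p ∨ q (jj n q p) ≤ p (jj n q p) :=
  Nat.find_spec (⟨n, Or.inl le_rfl⟩ : ∃ j, n ≤ j ∨ q j ≤ p j)

lemma jj_min {n : ℕ} {q p : ℕ → ℕ} : ∀ j < jj n q p, j < n ∧ p j < q j := by
  intro j hj
  have := Nat.find_min (⟨n, Or.inl le_rfl⟩ : ∃ j, n ≤ j ∨ q j ≤ p j) hj
  push_neg at this
  exact ⟨by omega, by omega⟩

lemma jj_eq {n k : ℕ} {q p : ℕ → ℕ} (h1 : n ≤ k ∨ q k ≤ p k)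
    (h2 : ∀ j < k, j < n ∧ p j < q j) : jj n q p = k := by
  refine le_antisymm (Nat.find_le h1) ?_
  by_contra h
  push_neg at h
  obtain ⟨h3, h4⟩ := h2 _ h
  rcases jj_spec n q p with h5 | h5 <;> omega

lemma jj_bad {n : ℕ} {q p : ℕ → ℕ} (hb : ∃ j, j < n + 1 ∧ q j ≤ p j) :
    q (jj n q p) ≤ p (jj n q p) := by
  obtain ⟨j, hj1, hj2⟩ := hb
  rcases jj_spec n q p with h | h
  · have hle : jj n q p ≤ j := Nat.find_le (Or.inr hj2)
    have hj : j = jj n q p := by have := jj_le n q p; omega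
    rwa [← hj]
  · exact h

/-- tail-swap map: bad pairs `(q, p)` of lengths `(n+1, n+1)` to pairs of lengths `(n+2, n)`. -/
def phiF (n : ℕ) (z : (ℕ → ℕ) × (ℕ → ℕ)) : (ℕ → ℕ) × (ℕ → ℕ) :=
  (fun i => if n + 2 ≤ i then 0 else if i ≤ jj n z.1 z.2 then z.1 i else z.2 (i - 1),
   fun i => if n ≤ i then 0 else if i < jj n z.1 z.2 then z.2 i else z.1 (i + 1))

/-- inverse tail-swap map. -/
def psiF (n : ℕ) (w : (ℕ → ℕ) × (ℕ → ℕ)) : (ℕ → ℕ) × (ℕ → ℕ) :=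
  (fun i => if n + 1 ≤ i then 0 else if i ≤ jj n w.1 w.2 then w.1 i else w.2 (i - 1),
   fun i => if n + 1 ≤ i then 0 else if i < jj n w.1 w.2 then w.2 i else w.1 (i + 1))

end Bij

section Mem

variable {M n : ℕ} {q p r s : ℕ → ℕ}

lemma phi_mem1 (hq : q ∈ monoS M (n + 1)) (hp : p ∈ monoS M (n + 1))
    (hb : ∃ j, j < n + 1 ∧ q j ≤ p j) : (phiF n (q, p)).1 ∈ monoS M (n + 2) := by
  obtain ⟨hq1, hq2, hq3⟩ := mem_monoS.mp hq
  obtain ⟨hp1, hp2, hp3⟩ := mem_monoS.mp hp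
  have hj0 := jj_le n q p
  have hcross := jj_bad (n := n) hb
  rw [mem_monoS]
  refine ⟨?_, ?_, ?_⟩
  · intro i j hij hj
    simp only [phiF]
    rw [if_neg (show ¬ n + 2 ≤ i by omega), if_neg (show ¬ n + 2 ≤ j by omega)]
    by_cases h1 : i ≤ jj n q p <;> by_cases h2 : j ≤ jj n q p
    · rw [if_pos h1, if_pos h2]; exact hq1 i j hij (by omega)
    · rw [if_pos h1, if_neg h2]
      calc q i ≤ q (jj n q p) := hq1 _ _ h1 (by omega)
        _ ≤ p (jj n q p) := hcross
        _ ≤ p (j - 1) := hp1 _ _ (by omega) (by omega)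
    · exact absurd (by omega : i ≤ jj n q p) h1
    · rw [if_neg h1, if_neg h2]; exact hp1 _ _ (by omega) (by omega)
  · intro i hi
    simp only [phiF]
    rw [if_neg (show ¬ n + 2 ≤ i by omega)]
    by_cases h1 : i ≤ jj n q p
    · rw [if_pos h1]; exact hq2 _ (by omega)
    · rw [if_neg h1]; exact hp2 _ (by omega)
  · intro i hi; simp only [phiF]; rw [if_pos (show n + 2 ≤ i by omega)]

lemma phi_mem2 (hq : q ∈ monoS M (n + 1)) (hp : p ∈ monoS M (n + 1)) :
    (phiF n (q, p)).2 ∈ monoS M n := by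
  obtain ⟨hq1, hq2, hq3⟩ := mem_monoS.mp hq
  obtain ⟨hp1, hp2, hp3⟩ := mem_monoS.mp hp
  have hj0 := jj_le n q p
  rw [mem_monoS]
  refine ⟨?_, ?_, ?_⟩
  · intro i j hij hj
    simp only [phiF]
    rw [if_neg (show ¬ n ≤ i by omega), if_neg (show ¬ n ≤ j by omega)]
    by_cases h1 : i < jj n q p <;> by_cases h2 : j < jj n q p
    · rw [if_pos h1, if_pos h2]; exact hp1 i j hij (by omega)
    · rw [if_pos h1, if_neg h2]
      have h3 := (jj_min (n := n) (q := q) (p := p) (jj n q p - 1) (by omega)).2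
      calc p i ≤ p (jj n q p - 1) := hp1 _ _ (by omega) (by omega)
        _ ≤ q (jj n q p - 1) := le_of_lt h3
        _ ≤ q (j + 1) := hq1 _ _ (by omega) (by omega)
    · exact absurd (by omega : i < jj n q p) h1
    · rw [if_neg h1, if_neg h2]; exact hq1 _ _ (by omega) (by omega)
  · intro i hi
    simp only [phiF]
    rw [if_neg (show ¬ n ≤ i by omega)]
    by_cases h1 : i < jj n q p
    · rw [if_pos h1]; exact hp2 _ (by omega)
    · rw [if_neg h1]; exact hq2 _ (by omega)
  · intro i hi; simp only [phiF]; rw [if_pos (show n ≤ i by omega)]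

lemma psi_mem1 (hr : r ∈ monoS M (n + 2)) (hs : s ∈ monoS M n) :
    (psiF n (r, s)).1 ∈ monoS M (n + 1) := by
  obtain ⟨hr1, hr2, hr3⟩ := mem_monoS.mp hr
  obtain ⟨hs1, hs2, hs3⟩ := mem_monoS.mp hs
  have hj1 := jj_le n r s
  rw [mem_monoS]
  refine ⟨?_, ?_, ?_⟩
  · intro i j hij hj
    simp only [psiF]
    rw [if_neg (show ¬ n + 1 ≤ i by omega), if_neg (show ¬ n + 1 ≤ j by omega)]
    by_cases h1 : i ≤ jj n r s <;> by_cases h2 : j ≤ jj n r s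
    · rw [if_pos h1, if_pos h2]; exact hr1 i j hij (by omega)
    · rw [if_pos h1, if_neg h2]
      have hcr : r (jj n r s) ≤ s (jj n r s) := by
        rcases jj_spec n r s with h | h
        · omega
        · exact h
      calc r i ≤ r (jj n r s) := hr1 _ _ h1 (by omega)
        _ ≤ s (jj n r s) := hcr
        _ ≤ s (j - 1) := hs1 _ _ (by omega) (by omega)
    · exact absurd (by omega : i ≤ jj n r s) h1
    · rw [if_neg h1, if_neg h2]; exact hs1 _ _ (by omega) (by omega)
  · intro i hi
    simp only [psiF]
    rw [if_neg (show ¬ n + 1 ≤ i by omega)]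
    by_cases h1 : i ≤ jj n r s
    · rw [if_pos h1]; exact hr2 _ (by omega)
    · rw [if_neg h1]; exact hs2 _ (by omega)
  · intro i hi; simp only [psiF]; rw [if_pos (show n + 1 ≤ i by omega)]

lemma psi_mem2 (hr : r ∈ monoS M (n + 2)) (hs : s ∈ monoS M n) :
    (psiF n (r, s)).2 ∈ monoS M (n + 1) := by
  obtain ⟨hr1, hr2, hr3⟩ := mem_monoS.mp hr
  obtain ⟨hs1, hs2, hs3⟩ := mem_monoS.mp hs
  have hj1 := jj_le n r s
  rw [mem_monoS]
  refine ⟨?_, ?_, ?_⟩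
  · intro i j hij hj
    simp only [psiF]
    rw [if_neg (show ¬ n + 1 ≤ i by omega), if_neg (show ¬ n + 1 ≤ j by omega)]
    by_cases h1 : i < jj n r s <;> by_cases h2 : j < jj n r s
    · rw [if_pos h1, if_pos h2]
      exact hs1 i j hij (jj_min (n := n) (q := r) (p := s) j h2).1
    · rw [if_pos h1, if_neg h2]
      have h3 := jj_min (n := n) (q := r) (p := s) (jj n r s - 1) (by omega)
      calc s i ≤ s (jj n r s - 1) := hs1 _ _ (by omega) h3.1
        _ ≤ r (jj n r s - 1) := le_of_lt h3.2
        _ ≤ r (j + 1) := hr1 _ _ (by omega) (by omega)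
    · exact absurd (by omega : i < jj n r s) h1
    · rw [if_neg h1, if_neg h2]; exact hr1 _ _ (by omega) (by omega)
  · intro i hi
    simp only [psiF]
    rw [if_neg (show ¬ n + 1 ≤ i by omega)]
    by_cases h1 : i < jj n r s
    · rw [if_pos h1]; exact hs2 _ (jj_min (n := n) (q := r) (p := s) i h1).1
    · rw [if_neg h1]; exact hr2 _ (by omega)
  · intro i hi; simp only [psiF]; rw [if_pos (show n + 1 ≤ i by omega)]

lemma psi_bad (hr : r ∈ monoS M (n + 2)) :
    (psiF n (r, s)).1 (jj n r s) ≤ (psiF n (r, s)).2 (jj n r s) := by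
  obtain ⟨hr1, hr2, hr3⟩ := mem_monoS.mp hr
  have hj1 := jj_le n r s
  simp only [psiF]
  rw [if_neg (show ¬ n + 1 ≤ jj n r s by omega), if_neg (show ¬ n + 1 ≤ jj n r s by omega),
    if_pos (le_refl (jj n r s)), if_neg (lt_irrefl (jj n r s))]
  exact hr1 _ _ (by omega) (by omega)

end Mem

section Inv

variable {M n : ℕ} {q p r s : ℕ → ℕ}

lemma jj_phi (hq : q ∈ monoS M (n + 1)) (hp : p ∈ monoS M (n + 1))
    (hb : ∃ j, j < n + 1 ∧ q j ≤ p j) :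
    jj n (phiF n (q, p)).1 (phiF n (q, p)).2 = jj n q p := by
  obtain ⟨hq1, hq2, hq3⟩ := mem_monoS.mp hq
  have hj0 := jj_le n q p
  apply jj_eq
  · by_cases h : jj n q p = n
    · exact Or.inl (le_of_eq h.symm)
    · refine Or.inr ?_
      simp only [phiF]
      rw [if_neg (show ¬ n + 2 ≤ jj n q p by omega), if_pos (le_refl _),
        if_neg (show ¬ n ≤ jj n q p by omega), if_neg (lt_irrefl _)]
      exact hq1 _ _ (by omega) (by omega)
  · intro j hjlt
    have hmin := jj_min (n := n) (q := q) (p := p) j hjlt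
    constructor
    · omega
    · simp only [phiF]
      rw [if_neg (show ¬ n + 2 ≤ j by omega), if_pos (show j ≤ jj n q p by omega),
        if_neg (show ¬ n ≤ j by omega), if_pos hjlt]
      exact hmin.2

lemma psi_phi (hq : q ∈ monoS M (n + 1)) (hp : p ∈ monoS M (n + 1))
    (hb : ∃ j, j < n + 1 ∧ q j ≤ p j) :
    psiF n (phiF n (q, p)) = (q, p) := by
  obtain ⟨hq1, hq2, hq3⟩ := mem_monoS.mp hq
  obtain ⟨hp1, hp2, hp3⟩ := mem_monoS.mp hp
  have hj0 := jj_le n q p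
  have hjj : jj n (phiF n (q, p)).1 (phiF n (q, p)).2 = jj n q p := jj_phi hq hp hb
  have hphi : phiF n (q, p) = ((phiF n (q, p)).1, (phiF n (q, p)).2) := rfl
  rw [hphi]
  simp only [psiF, hjj]
  refine Prod.ext ?_ ?_ <;> funext i <;> simp only [phiF]
  · by_cases h0 : n + 1 ≤ i
    · rw [if_pos h0]; exact (hq3 i h0).symm
    · rw [if_neg h0]
      by_cases h1 : i ≤ jj n q p
      · rw [if_pos h1, if_neg (show ¬ n + 2 ≤ i by omega), if_pos h1]
      · rw [if_neg h1, if_neg (show ¬ n ≤ i - 1 by omega),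
          if_neg (show ¬ i - 1 < jj n q p by omega),
          show i - 1 + 1 = i by omega]
  · by_cases h0 : n + 1 ≤ i
    · rw [if_pos h0]; exact (hp3 i h0).symm
    · rw [if_neg h0]
      by_cases h1 : i < jj n q p
      · rw [if_pos h1, if_neg (show ¬ n ≤ i by omega), if_pos h1]
      · rw [if_neg h1, if_neg (show ¬ n + 2 ≤ i + 1 by omega),
          if_neg (show ¬ i + 1 ≤ jj n q p by omega),
          show i + 1 - 1 = i by omega]

lemma jj_psi (hr : r ∈ monoS M (n + 2)) (hs : s ∈ monoS M n) :
    jj n (psiF n (r, s)).1 (psiF n (r, s)).2 = jj n r s := by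
  obtain ⟨hr1, hr2, hr3⟩ := mem_monoS.mp hr
  have hj1 := jj_le n r s
  apply jj_eq
  · exact Or.inr (psi_bad hr)
  · intro j hjlt
    have hmin := jj_min (n := n) (q := r) (p := s) j hjlt
    refine ⟨hmin.1, ?_⟩
    simp only [psiF]
    rw [if_neg (show ¬ n + 1 ≤ j by omega), if_pos (show j ≤ jj n r s by omega),
      if_neg (show ¬ n + 1 ≤ j by omega), if_pos hjlt]
    exact hmin.2

lemma phi_psi (hr : r ∈ monoS M (n + 2)) (hs : s ∈ monoS M n) :
    phiF n (psiF n (r, s)) = (r, s) := by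
  obtain ⟨hr1, hr2, hr3⟩ := mem_monoS.mp hr
  obtain ⟨hs1, hs2, hs3⟩ := mem_monoS.mp hs
  have hj1 := jj_le n r s
  have hjj : jj n (psiF n (r, s)).1 (psiF n (r, s)).2 = jj n r s := jj_psi hr hs
  have hpsi : psiF n (r, s) = ((psiF n (r, s)).1, (psiF n (r, s)).2) := rfl
  rw [hpsi]
  simp only [phiF, hjj]
  refine Prod.ext ?_ ?_ <;> funext i <;> simp only [psiF]
  · by_cases h0 : n + 2 ≤ i
    · rw [if_pos h0]; exact (hr3 i h0).symm
    · rw [if_neg h0]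
      by_cases h1 : i ≤ jj n r s
      · rw [if_pos h1, if_neg (show ¬ n + 1 ≤ i by omega), if_pos h1]
      · rw [if_neg h1, if_neg (show ¬ n + 1 ≤ i - 1 by omega),
          if_neg (show ¬ i - 1 < jj n r s by omega),
          show i - 1 + 1 = i by omega]
  · by_cases h0 : n ≤ i
    · rw [if_pos h0]; exact (hs3 i h0).symm
    · rw [if_neg h0]
      by_cases h1 : i < jj n r s
      · rw [if_pos h1, if_neg (show ¬ n + 1 ≤ i by omega), if_pos h1]
      · rw [if_neg h1, if_neg (show ¬ n + 1 ≤ i + 1 by omega),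
          if_neg (show ¬ i + 1 ≤ jj n r s by omega),
          show i + 1 - 1 = i by omega]

end Inv

section Weight

lemma prod_split (m k : ℕ) (h : k ≤ m) (F : ℕ → ℂ) :
    ∏ i ∈ Finset.range m, F i
      = (∏ i ∈ Finset.range k, F i) * ∏ i ∈ Finset.range (m - k), F (k + i) := by
  rw [← Finset.prod_range_add]
  congr 2
  omega

variable {n : ℕ}

lemma weight_phi (W : ℕ → ℕ → ℂ) (q p : ℕ → ℕ) :
    (∏ j ∈ Finset.range (n + 2), W j ((phiF n (q, p)).1 j)) *
      (∏ j ∈ Finset.range n, W (j + 1) ((phiF n (q, p)).2 j)) =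
    (∏ j ∈ Finset.range (n + 1), W j (q j)) *
      (∏ j ∈ Finset.range (n + 1), W (j + 1) (p j)) := by
  have hj0 := jj_le n q p
  set m := jj n q p with hm
  have e1 : ∏ j ∈ Finset.range (m + 1), W j ((phiF n (q, p)).1 j)
      = ∏ j ∈ Finset.range (m + 1), W j (q j) := by
    refine Finset.prod_congr rfl fun j hj => ?_
    simp only [Finset.mem_range] at hj
    simp only [phiF, ← hm]
    rw [if_neg (show ¬ n + 2 ≤ j by omega), if_pos (show j ≤ m by omega)]
  have e2 : ∏ i ∈ Finset.range (n + 1 - m), W (m + 1 + i) ((phiF n (q, p)).1 (m + 1 + i))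
      = ∏ i ∈ Finset.range (n + 1 - m), W (m + i + 1) (p (m + i)) := by
    refine Finset.prod_congr rfl fun i hi => ?_
    simp only [Finset.mem_range] at hi
    simp only [phiF, ← hm]
    rw [if_neg (show ¬ n + 2 ≤ m + 1 + i by omega), if_neg (show ¬ m + 1 + i ≤ m by omega),
      show m + 1 + i - 1 = m + i by omega, show m + 1 + i = m + i + 1 by omega]
  have e3 : ∏ i ∈ Finset.range (n - m), W (m + i + 1) ((phiF n (q, p)).2 (m + i))
      = ∏ i ∈ Finset.range (n - m), W (m + 1 + i) (q (m + 1 + i)) := by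
    refine Finset.prod_congr rfl fun i hi => ?_
    simp only [Finset.mem_range] at hi
    simp only [phiF, ← hm]
    rw [if_neg (show ¬ n ≤ m + i by omega), if_neg (show ¬ m + i < m by omega),
      show m + i + 1 = m + 1 + i by omega]
  have e4 : ∏ j ∈ Finset.range m, W (j + 1) ((phiF n (q, p)).2 j)
      = ∏ j ∈ Finset.range m, W (j + 1) (p j) := by
    refine Finset.prod_congr rfl fun j hj => ?_
    simp only [Finset.mem_range] at hj
    simp only [phiF, ← hm]
    rw [if_neg (show ¬ n ≤ j by omega), if_pos (show j < m by omega)]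
  rw [prod_split (n + 2) (m + 1) (by omega), prod_split n m (by omega),
    prod_split (n + 1) (m + 1) (by omega) (fun j => W j (q j)),
    prod_split (n + 1) m (by omega) (fun j => W (j + 1) (p j)),
    show n + 2 - (m + 1) = n + 1 - m by omega, show n + 1 - (m + 1) = n - m by omega,
    e1, e2, e3, e4]
  ring

end Weight

open Classical in
lemma sum_bad (M n : ℕ) (W : ℕ → ℕ → ℂ) :
    ∑ z ∈ ((monoS M (n + 1)) ×ˢ (monoS M (n + 1))).filter
        (fun z => ¬ ∀ j < n + 1, z.2 j < z.1 j),
      (∏ j ∈ Finset.range (n + 1), W j (z.1 j)) *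
        (∏ j ∈ Finset.range (n + 1), W (j + 1) (z.2 j))
    = (∑ r ∈ monoS M (n + 2), ∏ j ∈ Finset.range (n + 2), W j (r j)) *
      (∑ s ∈ monoS M n, ∏ j ∈ Finset.range n, W (j + 1) (s j)) := by
  classical
  rw [Finset.sum_mul_sum, ← Finset.sum_product']
  refine Finset.sum_nbij' (phiF n) (psiF n) ?_ ?_ ?_ ?_ ?_
  · rintro ⟨q, p⟩ hz
    rw [Finset.mem_filter, Finset.mem_product] at hz
    obtain ⟨⟨hq, hp⟩, hbad⟩ := hz
    push_neg at hbad
    have hb : ∃ j, j < n + 1 ∧ q j ≤ p j := by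
      obtain ⟨j, hj1, hj2⟩ := hbad
      exact ⟨j, hj1, hj2⟩
    rw [Finset.mem_product]
    exact ⟨phi_mem1 hq hp hb, phi_mem2 hq hp⟩
  · rintro ⟨r, s⟩ hw
    rw [Finset.mem_product] at hw
    obtain ⟨hr, hs⟩ := hw
    rw [Finset.mem_filter, Finset.mem_product]
    refine ⟨⟨psi_mem1 hr hs, psi_mem2 hr hs⟩, ?_⟩
    intro h
    exact absurd (h (jj n r s) (by have := jj_le n r s; omega))
      (not_lt.mpr (psi_bad hr))
  · rintro ⟨q, p⟩ hz
    rw [Finset.mem_filter, Finset.mem_product] at hz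
    obtain ⟨⟨hq, hp⟩, hbad⟩ := hz
    push_neg at hbad
    have hb : ∃ j, j < n + 1 ∧ q j ≤ p j := by
      obtain ⟨j, hj1, hj2⟩ := hbad
      exact ⟨j, hj1, hj2⟩
    exact psi_phi hq hp hb
  · rintro ⟨r, s⟩ hw
    rw [Finset.mem_product] at hw
    exact phi_psi hw.1 hw.2
  · rintro ⟨q, p⟩ hz
    exact (weight_phi W q p).symm

section StepA

variable (a c : ℕ)

/-- the diagonal weight. -/
noncomputable def Wg (a j k : ℕ) : ℂ :=
  ((k + 1 : ℕ) : ℂ) ^ (-(if j < a + 1 then (1 : ℂ) else 2))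

lemma mem_cells {x : ℕ × ℕ} :
    x ∈ cellsD 2 (fun i => if i < 2 then a + c + 2 else 0) (fun _ => 0) ↔
      x.1 < 2 ∧ x.2 < a + c + 2 := by
  classical
  simp only [cellsD, Finset.mem_filter, Finset.mem_product, Finset.mem_range]
  constructor
  · rintro ⟨⟨h1, h2⟩, -, h3⟩
    rw [if_pos h1] at h3
    exact ⟨h1, h3⟩
  · rintro ⟨h1, h2⟩
    rw [if_pos (by norm_num : (0:ℕ) < 2), if_pos h1]
    exact ⟨⟨h1, by omega⟩, Nat.zero_le _, h2⟩

lemma cells_eq :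
    cellsD 2 (fun i => if i < 2 then a + c + 2 else 0) (fun _ => 0)
      = Finset.range 2 ×ˢ Finset.range (a + c + 2) := by
  ext x
  rw [mem_cells, Finset.mem_product, Finset.mem_range, Finset.mem_range]

lemma prod_cells (G : ℕ × ℕ → ℂ) :
    ∏ x ∈ cellsD 2 (fun i => if i < 2 then a + c + 2 else 0) (fun _ => 0), G x
      = (∏ j ∈ Finset.range (a + c + 2), G (0, j)) *
          ∏ j ∈ Finset.range (a + c + 2), G (1, j) := by
  rw [cells_eq, Finset.prod_product, show (2 : ℕ) = 1 + 1 from rfl,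
    Finset.prod_range_succ, Finset.prod_range_one]

open Classical in
lemma zetaTF_eq_goodP (M' : ℕ) :
    zetaTF (M' + 1) 2 (fun i => if i < 2 then a + c + 2 else 0) (fun _ => 0)
      (fun cc => if cc.1 = 0 then (if cc.2 < a then (1 : ℂ) else 2)
        else (if cc.2 < a + 1 then (1 : ℂ) else 2))
    = ∑ z ∈ ((monoS (M' + 1) (a + c + 2)) ×ˢ (monoS (M' + 1) (a + c + 2))).filter
        (fun z => ∀ j < a + c + 2, z.2 j < z.1 j),
      (∏ j ∈ Finset.range (a + c + 2), Wg a j (z.1 j)) *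
        (∏ j ∈ Finset.range (a + c + 2), Wg a (j + 1) (z.2 j)) := by
  classical
  set M := M' + 1 with hM
  set N := a + c + 2 with hN
  set cells := cellsD 2 (fun i => if i < 2 then a + c + 2 else 0) (fun _ => 0) with hcells
  rw [zetaTF, tabSum]
  refine Finset.sum_nbij'
    (fun T => ((fun i => if h : ((1, i) : ℕ × ℕ) ∈ cells then (T ⟨(1, i), h⟩ : ℕ) else 0),
               (fun i => if h : ((0, i) : ℕ × ℕ) ∈ cells then (T ⟨(0, i), h⟩ : ℕ) else 0)))
    (fun z => (fun cell => ⟨min (if cell.val.1 = 0 then z.2 cell.val.2 else z.1 cell.val.2) M',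
      by omega⟩))
    ?_ ?_ ?_ ?_ ?_
  · intro T hT
    rw [Finset.mem_filter] at hT
    obtain ⟨-, hT1, hT2⟩ := hT
    rw [Finset.mem_filter, Finset.mem_product]
    refine ⟨⟨?_, ?_⟩, ?_⟩
    · rw [mem_monoS]
      refine ⟨?_, ?_, ?_⟩
      · intro i j hij hj
        dsimp only
        have hi : ((1, i) : ℕ × ℕ) ∈ cells := (mem_cells a c).mpr ⟨by omega, by omega⟩
        have hjc : ((1, j) : ℕ × ℕ) ∈ cells := (mem_cells a c).mpr ⟨by omega, by omega⟩
        rw [dif_pos hi, dif_pos hjc]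
        exact_mod_cast hT1 ⟨(1, i), hi⟩ ⟨(1, j), hjc⟩ rfl hij
      · intro i hi
        dsimp only
        have hic : ((1, i) : ℕ × ℕ) ∈ cells := (mem_cells a c).mpr ⟨by omega, by omega⟩
        rw [dif_pos hic]
        exact (T ⟨(1, i), hic⟩).isLt
      · intro i hi
        dsimp only
        rw [dif_neg (fun h => by have := ((mem_cells a c).mp h).2; omega)]
    · rw [mem_monoS]
      refine ⟨?_, ?_, ?_⟩
      · intro i j hij hj
        dsimp only
        have hi : ((0, i) : ℕ × ℕ) ∈ cells := (mem_cells a c).mpr ⟨by omega, by omega⟩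
        have hjc : ((0, j) : ℕ × ℕ) ∈ cells := (mem_cells a c).mpr ⟨by omega, by omega⟩
        rw [dif_pos hi, dif_pos hjc]
        exact_mod_cast hT1 ⟨(0, i), hi⟩ ⟨(0, j), hjc⟩ rfl hij
      · intro i hi
        dsimp only
        have hic : ((0, i) : ℕ × ℕ) ∈ cells := (mem_cells a c).mpr ⟨by omega, by omega⟩
        rw [dif_pos hic]
        exact (T ⟨(0, i), hic⟩).isLt
      · intro i hi
        dsimp only
        rw [dif_neg (fun h => by have := ((mem_cells a c).mp h).2; omega)]
    · intro j hj
      dsimp only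
      have h0 : ((0, j) : ℕ × ℕ) ∈ cells := (mem_cells a c).mpr ⟨by omega, by omega⟩
      have h1 : ((1, j) : ℕ × ℕ) ∈ cells := (mem_cells a c).mpr ⟨by omega, by omega⟩
      rw [dif_pos h0, dif_pos h1]
      exact_mod_cast hT2 ⟨(0, j), h0⟩ ⟨(1, j), h1⟩ (by norm_num) rfl
  · intro z hz
    rw [Finset.mem_filter, Finset.mem_product] at hz
    obtain ⟨⟨hq, hp⟩, hgood⟩ := hz
    obtain ⟨hq1, hq2, hq3⟩ := mem_monoS.mp hq
    obtain ⟨hp1, hp2, hp3⟩ := mem_monoS.mp hp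
    rw [Finset.mem_filter]
    refine ⟨Finset.mem_univ _, ?_, ?_⟩
    · rintro ⟨⟨x, y⟩, hc⟩ ⟨⟨x', y'⟩, hc'⟩ h1 h2
      dsimp only at h1 h2 ⊢
      obtain ⟨hx, hy⟩ := (mem_cells a c).mp hc
      obtain ⟨hx', hy'⟩ := (mem_cells a c).mp hc'
      subst h1
      rw [Fin.mk_le_mk]
      by_cases hx0 : x = 0
      · rw [if_pos hx0, if_pos hx0]
        exact min_le_min (hp1 _ _ h2 hy') le_rfl
      · rw [if_neg hx0, if_neg hx0]
        exact min_le_min (hq1 _ _ h2 hy') le_rfl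
    · rintro ⟨⟨x, y⟩, hc⟩ ⟨⟨x', y'⟩, hc'⟩ h1 h2
      dsimp only at h1 h2 ⊢
      obtain ⟨hx, hy⟩ := (mem_cells a c).mp hc
      obtain ⟨hx', hy'⟩ := (mem_cells a c).mp hc'
      subst h2
      rw [Fin.mk_lt_mk]
      have hx0 : x = 0 := by omega
      have hx1 : x' = 1 := by omega
      rw [if_pos hx0, if_neg (by omega : ¬ x' = 0)]
      have hlt : z.2 y < z.1 y := hgood y hy
      have hble : z.1 y < M := hq2 y hy
      omega
  · intro T hT
    dsimp only
    funext cell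
    obtain ⟨⟨x, y⟩, hc⟩ := cell
    obtain ⟨hx, hy⟩ := (mem_cells a c).mp hc
    apply Fin.ext
    dsimp only
    by_cases hx0 : x = 0
    · subst hx0
      rw [if_pos rfl, dif_pos hc]
      have : (T ⟨(0, y), hc⟩ : ℕ) ≤ M' := by
        have := (T ⟨(0, y), hc⟩).isLt
        omega
      omega
    · have hx1 : x = 1 := by omega
      subst hx1
      rw [if_neg (by omega : ¬ (1:ℕ) = 0), dif_pos hc]
      have : (T ⟨(1, y), hc⟩ : ℕ) ≤ M' := by
        have := (T ⟨(1, y), hc⟩).isLt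
        omega
      omega
  · intro z hz
    dsimp only
    rw [Finset.mem_filter, Finset.mem_product] at hz
    obtain ⟨⟨hq, hp⟩, hgood⟩ := hz
    obtain ⟨hq1, hq2, hq3⟩ := mem_monoS.mp hq
    obtain ⟨hp1, hp2, hp3⟩ := mem_monoS.mp hp
    have hzeta : z = (z.1, z.2) := rfl
    rw [hzeta]
    refine Prod.ext ?_ ?_ <;> funext i <;> dsimp only
    · by_cases h : ((1, i) : ℕ × ℕ) ∈ cells
      · rw [dif_pos h]
        have hi := ((mem_cells a c).mp h).2
        have := hq2 i hi
        rw [if_neg (by omega : ¬ (1:ℕ) = 0)]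
        omega
      · rw [dif_neg h]
        have hi : N ≤ i := by
          by_contra hcon
          exact h ((mem_cells a c).mpr ⟨by omega, by omega⟩)
        exact (hq3 i hi).symm
    · by_cases h : ((0, i) : ℕ × ℕ) ∈ cells
      · rw [dif_pos h]
        have hi := ((mem_cells a c).mp h).2
        have := hp2 i hi
        rw [if_pos rfl]
        omega
      · rw [dif_neg h]
        have hi : N ≤ i := by
          by_contra hcon
          exact h ((mem_cells a c).mpr ⟨by omega, by omega⟩)
        exact (hp3 i hi).symm
  · intro T hT
    dsimp only
    set G : ℕ × ℕ → ℂ := fun x => if x.1 = 0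
        then Wg a (x.2 + 1) (if h : ((0, x.2) : ℕ × ℕ) ∈ cells then (T ⟨(0, x.2), h⟩ : ℕ) else 0)
        else Wg a x.2 (if h : ((1, x.2) : ℕ × ℕ) ∈ cells then (T ⟨(1, x.2), h⟩ : ℕ) else 0)
      with hG
    have step1 : ∀ cc : ↥cells,
        ((((T cc : ℕ) + 1 : ℕ)) : ℂ) ^
            (-(if cc.val.1 = 0 then (if cc.val.2 < a then (1 : ℂ) else 2)
              else (if cc.val.2 < a + 1 then (1 : ℂ) else 2)))
        = G cc.val := by
      rintro ⟨⟨x, y⟩, hc⟩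
      obtain ⟨hx, hy⟩ := (mem_cells a c).mp hc
      rw [hG]
      dsimp only
      by_cases hx0 : x = 0
      · subst hx0
        rw [if_pos rfl, if_pos rfl, dif_pos hc, Wg]
        simp only [show (y + 1 < a + 1) ↔ (y < a) from by omega]
      · have hx1 : x = 1 := by omega
        subst hx1
        rw [if_neg (by omega : ¬ (1:ℕ) = 0), if_neg (by omega : ¬ (1:ℕ) = 0), dif_pos hc, Wg]
    calc (∏ cc : ↥cells, ((((T cc : ℕ) + 1 : ℕ)) : ℂ) ^
            (-(if cc.val.1 = 0 then (if cc.val.2 < a then (1 : ℂ) else 2)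
              else (if cc.val.2 < a + 1 then (1 : ℂ) else 2))))
        = ∏ cc : ↥cells, G cc.val := Finset.prod_congr rfl (fun cc _ => step1 cc)
      _ = ∏ x ∈ cells, G x := Finset.prod_coe_sort cells G
      _ = (∏ j ∈ Finset.range N, G (0, j)) * ∏ j ∈ Finset.range N, G (1, j) := prod_cells a c G
      _ = _ := by
          rw [mul_comm]
          congr 1 <;>
            · refine Finset.prod_congr rfl fun j hj => ?_
              rw [hG]
              dsimp only
              first
              | rfl
              | rw [if_neg (by omega : ¬ (1:ℕ) = 0)]
              | rw [if_pos rfl]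

end StepA

section Identity

lemma zetaStarT_zero (d : ℕ) (hd : 0 < d) (s : ℕ → ℂ) : zetaStarT 0 d s = 0 := by
  classical
  rw [zetaStarT]
  convert Finset.sum_empty
  rw [Finset.eq_empty_iff_forall_notMem]
  intro f _
  exact (f ⟨0, hd⟩).elim0

open Classical in
lemma zetaTF_zero (a c : ℕ) (sf : ℕ × ℕ → ℂ) :
    zetaTF 0 2 (fun i => if i < 2 then a + c + 2 else 0) (fun _ => 0) sf = 0 := by
  classical
  rw [zetaTF, tabSum]
  convert Finset.sum_empty
  rw [Finset.eq_empty_iff_forall_notMem]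
  intro T _
  exact (T ⟨(0, 0), (mem_cells a c).mpr ⟨by omega, by omega⟩⟩).elim0

lemma zetaStarT_as_Wg_q (M : ℕ) (a n : ℕ) :
    zetaStarT M (n + 1) (fun i => if i < a + 1 then (1 : ℂ) else 2)
      = ∑ g ∈ monoS M (n + 1), ∏ i ∈ Finset.range (n + 1), Wg a i (g i) := by
  rw [zetaStarT_eq_monoS]
  simp only [Wg]

lemma zetaStarT_as_Wg_p (M : ℕ) (a n : ℕ) :
    zetaStarT M n (fun i => if i < a then (1 : ℂ) else 2)
      = ∑ g ∈ monoS M n, ∏ i ∈ Finset.range n, Wg a (i + 1) (g i) := by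
  rw [zetaStarT_eq_monoS]
  simp only [Wg, Nat.add_lt_add_iff_right]

open Classical in
theorem zetaTF_identity (a c M : ℕ) :
    zetaTF M 2 (fun i => if i < 2 then a + c + 2 else 0) (fun _ => 0)
      (fun cc => if cc.1 = 0 then (if cc.2 < a then (1 : ℂ) else 2)
        else (if cc.2 < a + 1 then (1 : ℂ) else 2))
    = zetaStarT M (a + c + 2) (fun i => if i < a + 1 then (1 : ℂ) else 2) *
        zetaStarT M (a + c + 2) (fun i => if i < a then (1 : ℂ) else 2)
      - zetaStarT M (a + c + 3) (fun i => if i < a + 1 then (1 : ℂ) else 2) *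
        zetaStarT M (a + c + 1) (fun i => if i < a then (1 : ℂ) else 2) := by
  classical
  rcases M with _ | M'
  · rw [zetaTF_zero, zetaStarT_zero _ (by omega), zetaStarT_zero _ (by omega),
      zetaStarT_zero _ (by omega), zetaStarT_zero _ (by omega)]
    ring
  · set n := a + c + 1 with hn
    have h1 : zetaStarT (M' + 1) (a + c + 2) (fun i => if i < a + 1 then (1 : ℂ) else 2)
        = ∑ g ∈ monoS (M' + 1) (n + 1), ∏ i ∈ Finset.range (n + 1), Wg a i (g i) :=
      zetaStarT_as_Wg_q (M' + 1) a n
    have h2 : zetaStarT (M' + 1) (a + c + 2) (fun i => if i < a then (1 : ℂ) else 2)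
        = ∑ g ∈ monoS (M' + 1) (n + 1), ∏ i ∈ Finset.range (n + 1), Wg a (i + 1) (g i) :=
      zetaStarT_as_Wg_p (M' + 1) a (n + 1)
    have h3 : zetaStarT (M' + 1) (a + c + 3) (fun i => if i < a + 1 then (1 : ℂ) else 2)
        = ∑ g ∈ monoS (M' + 1) (n + 2), ∏ i ∈ Finset.range (n + 2), Wg a i (g i) :=
      zetaStarT_as_Wg_q (M' + 1) a (n + 1)
    have h4 : zetaStarT (M' + 1) (a + c + 1) (fun i => if i < a then (1 : ℂ) else 2)
        = ∑ g ∈ monoS (M' + 1) n, ∏ i ∈ Finset.range n, Wg a (i + 1) (g i) :=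
      zetaStarT_as_Wg_p (M' + 1) a n
    rw [h1, h2, h3, h4, zetaTF_eq_goodP a c M']
    rw [Finset.sum_mul_sum, ← Finset.sum_product']
    rw [← Finset.sum_filter_add_sum_filter_not
      ((monoS (M' + 1) (n + 1)) ×ˢ (monoS (M' + 1) (n + 1)))
      (fun z => ∀ j < n + 1, z.2 j < z.1 j)
      (fun z => (∏ j ∈ Finset.range (n + 1), Wg a j (z.1 j)) *
        (∏ j ∈ Finset.range (n + 1), Wg a (j + 1) (z.2 j)))]
    rw [sum_bad (M' + 1) n (Wg a)]
    ring

end Identity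

section Convergence

/-- real weight. -/
noncomputable def rwt (e i k : ℕ) : ℝ := if i < e then ((k : ℝ) + 1)⁻¹ else (((k : ℝ) + 1) ^ 2)⁻¹

lemma rwt_nonneg (e i k : ℕ) : 0 ≤ rwt e i k := by
  rw [rwt]; split_ifs <;> positivity

/-- real truncated star sum. -/
noncomputable def SR (M d e : ℕ) : ℝ := ∑ g ∈ monoS M d, ∏ i ∈ Finset.range d, rwt e i (g i)

lemma zetaStarT_eq_SR (M d e : ℕ) :
    zetaStarT M d (fun i => if i < e then (1 : ℂ) else 2) = ((SR M d e : ℝ) : ℂ) := by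
  rw [zetaStarT_eq_monoS, SR]
  push_cast
  refine Finset.sum_congr rfl fun g _ => Finset.prod_congr rfl fun i _ => ?_
  rw [rwt]
  by_cases h : i < e
  · rw [if_pos h, if_pos h, Complex.cpow_neg, Complex.cpow_one, Complex.ofReal_inv]
    norm_cast
    simp
  · rw [if_neg h, if_neg h, Complex.cpow_neg, show (2 : ℂ) = ((2 : ℕ) : ℂ) by norm_num,
      Complex.cpow_natCast, Complex.ofReal_inv, Complex.ofReal_pow]
    norm_cast
    simp

lemma monoS_subset {M M' d : ℕ} (h : M ≤ M') : monoS M d ⊆ monoS M' d := by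
  intro g hg
  obtain ⟨h1, h2, h3⟩ := mem_monoS.mp hg
  exact mem_monoS.mpr ⟨h1, fun i hi => lt_of_lt_of_le (h2 i hi) h, h3⟩

lemma SR_monotone (d e : ℕ) : Monotone (fun M => SR M d e) := by
  intro M M' h
  exact Finset.sum_le_sum_of_subset_of_nonneg (monoS_subset h)
    (fun g _ _ => Finset.prod_nonneg fun i _ => rwt_nonneg e i (g i))

/-- the redistribution exponent. -/
noncomputable def bexp (d' : ℕ) : ℝ := 1 / (2 * (d' + 1))

lemma bexp_pos (d' : ℕ) : 0 < bexp d' := by rw [bexp]; positivity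

lemma bexp_le (d' : ℕ) : (d' : ℝ) * bexp d' ≤ 1 / 2 := by
  rw [bexp, mul_one_div, div_le_div_iff₀ (by positivity) (by norm_num)]
  nlinarith [Nat.cast_nonneg (α := ℝ) d']

/-- dominating weight. -/
noncomputable def Gb (d' i : ℕ) (k : ℕ) : ℝ :=
  if i < d' then ((k : ℝ) + 1) ^ (-(1 + bexp d')) else ((k : ℝ) + 1) ^ (-(3 / 2 : ℝ))

lemma Gb_nonneg (d' i k : ℕ) : 0 ≤ Gb d' i k := by
  rw [Gb]; split_ifs <;> positivity

lemma term_bound {M d' e : ℕ} (he : e ≤ d') {g : ℕ → ℕ} (hg : g ∈ monoS M (d' + 1)) :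
    ∏ i ∈ Finset.range (d' + 1), rwt e i (g i)
      ≤ ∏ i ∈ Finset.range (d' + 1), Gb d' i (g i) := by
  obtain ⟨hm, -, -⟩ := mem_monoS.mp hg
  set x : ℕ → ℝ := fun i => (g i : ℝ) + 1 with hx
  have hx1 : ∀ i, (1 : ℝ) ≤ x i := fun i => by
    show (1 : ℝ) ≤ (g i : ℝ) + 1
    have : (0 : ℝ) ≤ (g i : ℝ) := Nat.cast_nonneg _
    linarith
  have hx0 : ∀ i, (0 : ℝ) < x i := fun i => lt_of_lt_of_le one_pos (hx1 i)
  have hxle : ∀ i ∈ Finset.range d', x i ≤ x d' := by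
    intro i hi
    rw [Finset.mem_range] at hi
    show (g i : ℝ) + 1 ≤ (g d' : ℝ) + 1
    have := hm i d' (by omega) (by omega)
    have : (g i : ℝ) ≤ (g d' : ℝ) := by exact_mod_cast this
    linarith
  calc ∏ i ∈ Finset.range (d' + 1), rwt e i (g i)
      = (∏ i ∈ Finset.range d', rwt e i (g i)) * rwt e d' (g d') :=
        Finset.prod_range_succ _ _
    _ ≤ (∏ i ∈ Finset.range d', (x i)⁻¹) * rwt e d' (g d') := by
        refine mul_le_mul_of_nonneg_right ?_ (rwt_nonneg _ _ _)
        refine Finset.prod_le_prod (fun i _ => rwt_nonneg _ _ _) (fun i _ => ?_)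
        rw [rwt]
        split_ifs
        · exact le_rfl
        · rw [inv_le_inv₀ (by positivity) (hx0 i)]
          calc x i = x i * 1 := (mul_one _).symm
            _ ≤ x i * x i := by
                refine mul_le_mul_of_nonneg_left (hx1 i) (le_of_lt (hx0 i))
            _ = x i ^ 2 := (sq (x i)).symm
    _ = (∏ i ∈ Finset.range d', (x i)⁻¹) * (x d') ^ (-(2 : ℝ)) := by
        congr 1
        rw [rwt, if_neg (by omega : ¬ d' < e), Real.rpow_neg (le_of_lt (hx0 d')),
          show ((2 : ℝ)) = ((2 : ℕ) : ℝ) by norm_num, Real.rpow_natCast]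
    _ ≤ (∏ i ∈ Finset.range d', (x i)⁻¹) *
          (x d') ^ (-(3 / 2 : ℝ) + -((d' : ℝ) * bexp d')) := by
        refine mul_le_mul_of_nonneg_left ?_
          (Finset.prod_nonneg fun i _ => by positivity)
        refine Real.rpow_le_rpow_of_exponent_le (hx1 d') ?_
        have := bexp_le d'
        linarith
    _ = (∏ i ∈ Finset.range d', (x i)⁻¹) *
          ((x d') ^ (-(3 / 2 : ℝ)) * ∏ i ∈ Finset.range d', (x d') ^ (-(bexp d'))) := by
        have hsplit : (x d') ^ (-(3 / 2 : ℝ) + -((d' : ℝ) * bexp d'))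
            = (x d') ^ (-(3 / 2 : ℝ)) * (x d') ^ (-((d' : ℝ) * bexp d')) :=
          Real.rpow_add (hx0 d') _ _
        have hpow : (x d') ^ (-((d' : ℝ) * bexp d'))
            = ∏ i ∈ Finset.range d', (x d') ^ (-(bexp d')) := by
          rw [Finset.prod_const, Finset.card_range,
            ← Real.rpow_natCast ((x d') ^ (-(bexp d'))) d',
            ← Real.rpow_mul (le_of_lt (hx0 d'))]
          congr 1
          ring
        rw [hsplit, hpow]
    _ ≤ (∏ i ∈ Finset.range d', (x i)⁻¹) *
          ((x d') ^ (-(3 / 2 : ℝ)) * ∏ i ∈ Finset.range d', (x i) ^ (-(bexp d'))) := by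
        refine mul_le_mul_of_nonneg_left (mul_le_mul_of_nonneg_left ?_ (by positivity)) ?_
        · refine Finset.prod_le_prod (fun i _ => by positivity) (fun i hi => ?_)
          exact Real.rpow_le_rpow_of_nonpos (hx0 i) (hxle i hi)
            (le_of_lt (neg_neg_iff_pos.mpr (bexp_pos d')))
        · exact Finset.prod_nonneg fun i _ => by positivity
    _ = ∏ i ∈ Finset.range (d' + 1), Gb d' i (g i) := by
        rw [Finset.prod_range_succ]
        rw [show Gb d' d' (g d') = (x d') ^ (-(3 / 2 : ℝ)) by
          rw [Gb, if_neg (lt_irrefl d')]]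
        rw [← mul_assoc, mul_comm _ ((x d') ^ (-(3 / 2 : ℝ))), mul_assoc,
          ← Finset.prod_mul_distrib]
        rw [mul_comm ((x d') ^ (-(3 / 2 : ℝ)))]
        congr 1
        refine Finset.prod_congr rfl fun i hi => ?_
        rw [Finset.mem_range] at hi
        rw [Gb, if_pos hi, neg_add, Real.rpow_add (hx0 i), ← Real.rpow_neg_one (x i)]
        try rfl


lemma summable_shift (p : ℝ) (hp : 1 < p) :
    Summable (fun k : ℕ => ((k : ℝ) + 1) ^ (-p)) := by
  have h := Real.summable_one_div_nat_rpow.mpr hp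
  have h2 := h.comp_injective (add_left_injective 1)
  refine h2.congr fun k => ?_
  show 1 / ((k + 1 : ℕ) : ℝ) ^ p = ((k : ℝ) + 1) ^ (-p)
  rw [Real.rpow_neg (by positivity), one_div]
  push_cast
  rfl

lemma summable_Gb (d' i : ℕ) : Summable (fun k : ℕ => Gb d' i k) := by
  by_cases h : i < d'
  · refine (summable_shift (1 + bexp d') (by have := bexp_pos d'; linarith)).congr fun k => ?_
    rw [Gb, if_pos h]
  · refine (summable_shift (3 / 2) (by norm_num)).congr fun k => ?_
    rw [Gb, if_neg h]

open Classical in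
lemma monoS_sum_eq (M d : ℕ) (F : ℕ → ℕ → ℝ) :
    ∑ g ∈ monoS M d, ∏ i ∈ Finset.range d, F i (g i)
      = ∑ f ∈ Finset.univ.filter (fun f : Fin d → Fin M => ∀ i j : Fin d, i ≤ j → f i ≤ f j),
          ∏ i : Fin d, F (i : ℕ) ((f i : ℕ)) := by
  classical
  rw [monoS, Finset.sum_image padT_injOn]
  refine Finset.sum_congr (by congr 1) fun f _ => ?_
  rw [← Fin.prod_univ_eq_prod_range (fun i => F i (padT f i)) d]
  exact Finset.prod_congr rfl fun i _ => by simp [padT, i.isLt]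

lemma SR_bounded (d' e : ℕ) (he : e ≤ d') (M : ℕ) :
    SR M (d' + 1) e ≤ ∏ i ∈ Finset.range (d' + 1), (∑' k : ℕ, Gb d' i k) := by
  classical
  calc SR M (d' + 1) e
      ≤ ∑ g ∈ monoS M (d' + 1), ∏ i ∈ Finset.range (d' + 1), Gb d' i (g i) :=
        Finset.sum_le_sum fun g hg => term_bound he hg
    _ = ∑ f ∈ Finset.univ.filter
          (fun f : Fin (d' + 1) → Fin M => ∀ i j : Fin (d' + 1), i ≤ j → f i ≤ f j),
          ∏ i : Fin (d' + 1), Gb d' (i : ℕ) ((f i : ℕ)) := monoS_sum_eq M (d' + 1) (Gb d')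
    _ ≤ ∑ f : Fin (d' + 1) → Fin M, ∏ i : Fin (d' + 1), Gb d' (i : ℕ) ((f i : ℕ)) :=
        Finset.sum_le_sum_of_subset_of_nonneg (Finset.filter_subset _ _)
          (fun f _ _ => Finset.prod_nonneg fun i _ => Gb_nonneg _ _ _)
    _ = ∏ i : Fin (d' + 1), ∑ k : Fin M, Gb d' (i : ℕ) ((k : ℕ)) := by
        rw [Finset.prod_univ_sum]
        rw [Fintype.piFinset_univ]
    _ ≤ ∏ i : Fin (d' + 1), (∑' k : ℕ, Gb d' (i : ℕ) k) := by
        refine Finset.prod_le_prod (fun i _ => Finset.sum_nonneg fun k _ => Gb_nonneg _ _ _)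
          (fun i _ => ?_)
        rw [Fin.sum_univ_eq_sum_range (fun k => Gb d' (i : ℕ) k) M]
        exact Summable.sum_le_tsum (Finset.range M) (fun k _ => Gb_nonneg _ _ _) (summable_Gb d' i)
    _ = ∏ i ∈ Finset.range (d' + 1), (∑' k : ℕ, Gb d' i k) :=
        Fin.prod_univ_eq_prod_range (fun i => ∑' k : ℕ, Gb d' i k) (d' + 1)

lemma SR_tendsto (d' e : ℕ) (he : e ≤ d') :
    ∃ L : ℝ, Filter.Tendsto (fun M => SR M (d' + 1) e) Filter.atTop (nhds L) := by
  refine ⟨_, tendsto_atTop_ciSup (SR_monotone (d' + 1) e)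
    ⟨∏ i ∈ Finset.range (d' + 1), (∑' k : ℕ, Gb d' i k), ?_⟩⟩
  rintro y ⟨M, rfl⟩
  exact SR_bounded d' e he M

lemma zetaStar_tendsto (d' e : ℕ) (he : e ≤ d') :
    ∃ z : ℂ, Filter.Tendsto
      (fun M => zetaStarT M (d' + 1) (fun i => if i < e then (1 : ℂ) else 2))
      Filter.atTop (nhds z) := by
  obtain ⟨L, hL⟩ := SR_tendsto d' e he
  refine ⟨(L : ℂ), ?_⟩
  have h2 : Filter.Tendsto (fun M => ((SR M (d' + 1) e : ℝ) : ℂ)) Filter.atTop (nhds (L : ℂ)) :=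
    (Complex.continuous_ofReal.tendsto L).comp hL
  exact h2.congr fun M => (zetaStarT_eq_SR M (d' + 1) e).symm

end Convergence

/-- Two-row Schur multiple zeta values as differences of products of
multiple zeta-star values. -/
theorem two_row_schur_zeta_as_zeta_star (a c : ℕ) :
    ∃ z1 z2 z3 z4 : ℂ,
      Filter.Tendsto
          (fun M => zetaStarT M (a + c + 2) (fun i => if i < a + 1 then (1 : ℂ) else 2))
          Filter.atTop (nhds z1) ∧
      Filter.Tendsto
          (fun M => zetaStarT M (a + c + 2) (fun i => if i < a then (1 : ℂ) else 2))
          Filter.atTop (nhds z2) ∧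
      Filter.Tendsto
          (fun M => zetaStarT M (a + c + 3) (fun i => if i < a + 1 then (1 : ℂ) else 2))
          Filter.atTop (nhds z3) ∧
      Filter.Tendsto
          (fun M => zetaStarT M (a + c + 1) (fun i => if i < a then (1 : ℂ) else 2))
          Filter.atTop (nhds z4) ∧
      Filter.Tendsto
          (fun M => zetaTF M 2 (fun i => if i < 2 then a + c + 2 else 0) (fun _ => 0)
            (fun cc =>
              if cc.1 = 0 then (if cc.2 < a then (1 : ℂ) else 2)
              else (if cc.2 < a + 1 then (1 : ℂ) else 2)))
          Filter.atTop (nhds (z1 * z2 - z3 * z4)) := by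
  obtain ⟨z1, h1⟩ := zetaStar_tendsto (a + c + 1) (a + 1) (by omega)
  obtain ⟨z2, h2⟩ := zetaStar_tendsto (a + c + 1) a (by omega)
  obtain ⟨z3, h3⟩ := zetaStar_tendsto (a + c + 2) (a + 1) (by omega)
  obtain ⟨z4, h4⟩ := zetaStar_tendsto (a + c) a (by omega)
  refine ⟨z1, z2, z3, z4, h1, h2, h3, h4, ?_⟩
  exact ((h1.mul h2).sub (h3.mul h4)).congr fun M => (zetaTF_identity a c M).symm
end
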